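/- arXiv:2602.01987 — 8 statements merged into one kernel-verified Lean document; each statement's English description precedes it below -/
import Mathlib

section
/- Let A : Fin s → Fin r → ℕ be a normalizer matrix. Then there exist p : ℕ, size functions s', r' : Fin p → ℕ, bijections e : Fin s ≃ (Σ k : Fin p, Fin (s' k)) and g : Fin r ≃ (Σ k : Fin p, Fin (r' k)), and a function c : (Σ k : Fin p, Fin (s' k)) → ℕ with c x > 0 for all x, such that for all i : Fin s and j : Fin r one has A i j = c (e i) if the first (block) components of e i and g j coincide, and A i j = 0 otherwise. In other words, every normalizer matrix is pseudo-equivalent to a block-diagonal matrix in which every off-diagonal block is zero and every row of each diagonal block consists of equal nonzero entries. -/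
/-- The support of the `i`-th row of a matrix `A : Fin s → Fin r → ℕ`. -/
def rowSupport {s r : ℕ} (A : Fin s → Fin r → ℕ) (i : Fin s) : Set (Fin r) :=
  {j : Fin r | A i j ≠ 0}

/-- A matrix is irredundant if no row and no column is identically zero. -/
def Irredundant {s r : ℕ} (A : Fin s → Fin r → ℕ) : Prop :=
  (∀ i : Fin s, ∃ j : Fin r, A i j ≠ 0) ∧ (∀ j : Fin r, ∃ i : Fin s, A i j ≠ 0)

/-- A matrix is a normalizer matrix if it is irredundant, in every row all
nonzero entries are equal, and any two row supports are equal or disjoint. -/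
def IsNormalizerMatrix {s r : ℕ} (A : Fin s → Fin r → ℕ) : Prop :=
  Irredundant A ∧
  (∀ i : Fin s, ∀ j k : Fin r, A i j ≠ 0 → A i k ≠ 0 → A i j = A i k) ∧
  (∀ i k : Fin s, rowSupport A i = rowSupport A k ∨
      rowSupport A i ∩ rowSupport A k = ∅)

/-- every normalizer matrix is pseudo-equivalent to a
block-diagonal matrix whose off-diagonal blocks vanish and each of whose
diagonal blocks has all the entries of every row equal and nonzero. -/
theorem normalizerMatrix_blockDiagonal {s r : ℕ}
    (A : Fin s → Fin r → ℕ) (hA : IsNormalizerMatrix A) :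
    ∃ (p : ℕ) (s' r' : Fin p → ℕ)
      (e : Fin s ≃ (Σ k : Fin p, Fin (s' k)))
      (g : Fin r ≃ (Σ k : Fin p, Fin (r' k)))
      (c : (Σ k : Fin p, Fin (s' k)) → ℕ),
      (∀ x, 0 < c x) ∧
      (∀ (i : Fin s) (j : Fin r),
        A i j = if (e i).1 = (g j).1 then c (e i) else 0) := by
  classical
  obtain ⟨⟨hrow, hcol⟩, hconst, hsupp⟩ := hA
  let st : Setoid (Fin s) := Setoid.ker (rowSupport A)
  let Q := Quotient st
  let p := Fintype.card Q
  let q : Q ≃ Fin p := Fintype.equivFin Q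
  let f : Fin s → Fin p := fun i => q ⟦i⟧
  have hf : ∀ i k : Fin s, f i = f k ↔ rowSupport A i = rowSupport A k := by
    intro i k
    constructor
    · intro h
      exact Quotient.exact (q.injective h)
    · intro h
      exact congrArg q (Quotient.sound h)
  let ρ : Fin r → Fin s := fun j => (hcol j).choose
  have hρ : ∀ j, A (ρ j) j ≠ 0 := fun j => (hcol j).choose_spec
  let g0 : Fin r → Fin p := fun j => f (ρ j)
  let s' : Fin p → ℕ := fun k => Fintype.card {i // f i = k}
  let r' : Fin p → ℕ := fun k => Fintype.card {j // g0 j = k}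
  let e : Fin s ≃ Σ k : Fin p, Fin (s' k) :=
    (Equiv.sigmaFiberEquiv f).symm.trans
      (Equiv.sigmaCongrRight fun k => Fintype.equivFin _)
  let g : Fin r ≃ Σ k : Fin p, Fin (r' k) :=
    (Equiv.sigmaFiberEquiv g0).symm.trans
      (Equiv.sigmaCongrRight fun k => Fintype.equivFin _)
  have he1 : ∀ i, (e i).1 = f i := fun i => rfl
  have hg1 : ∀ j, (g j).1 = g0 j := fun j => rfl
  let v : Fin s → ℕ := fun i => A i (hrow i).choose
  have hv : ∀ i, v i ≠ 0 := fun i => (hrow i).choose_spec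
  refine ⟨p, s', r', e, g, fun x => v (e.symm x),
    fun x => Nat.pos_of_ne_zero (hv _), ?_⟩
  intro i j
  simp only [he1, hg1, Equiv.symm_apply_apply]
  by_cases h : f i = g0 j
  · rw [if_pos h]
    have hs : rowSupport A i = rowSupport A (ρ j) := (hf i (ρ j)).mp h
    have hj : A i j ≠ 0 := by
      have : j ∈ rowSupport A (ρ j) := hρ j
      rw [← hs] at this
      exact this
    exact hconst i j (hrow i).choose hj (hv i)
  · rw [if_neg h]
    by_contra hne
    have hj : j ∈ rowSupport A i ∩ rowSupport A (ρ j) := ⟨hne, hρ j⟩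
    rcases hsupp i (ρ j) with heq | hdis
    · exact h ((hf i (ρ j)).mpr heq)
    · rw [hdis] at hj
      exact hj
end

section
/- Let n, r ≥ 1 and let f : Fin n → Fin r be a surjective function. Let B_f ⊆ Matrix (Fin n) (Fin n) ℂ be the unital subalgebra consisting of all matrices of the form Matrix.diagonal (c ∘ f) with c : Fin r → ℂ (this realizes the inclusion ℂ^r ⊆ M_n(ℂ), with inclusion matrix entries a_j = |f⁻¹(j)|). If the inclusion B_f ⊆ M_n(ℂ) is regular, i.e. the ℂ-linear span of the set N := {U ∈ Matrix (Fin n) (Fin n) ℂ : U is unitary and U B_f Uᴴ = B_f} is all of Matrix (Fin n) (Fin n) ℂ, then all fibers of f have the same cardinality: for all j, k : Fin r, |f⁻¹({j})| = |f⁻¹({k})|. Equivalently, all entries of the inclusion matrix of ℂ^r ⊆ M_n(ℂ) are equal. -/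
open Matrix

/-- The subalgebra `ℂ^r ⊆ M_n(ℂ)` determined by `f : Fin n → Fin r`,
consisting of all diagonal matrices `diagonal (c ∘ f)`. -/
def Bf (n r : ℕ) (f : Fin n → Fin r) : Set (Matrix (Fin n) (Fin n) ℂ) :=
  {M | ∃ c : Fin r → ℂ, M = Matrix.diagonal (c ∘ f)}

/-- The normalizer of a subset `B` of `M_n(ℂ)`: unitaries `U` with `U B Uᴴ = B`. -/
def matrixNormalizer (n : ℕ) (B : Set (Matrix (Fin n) (Fin n) ℂ)) :
    Set (Matrix (Fin n) (Fin n) ℂ) :=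
  {U | U ∈ unitary (Matrix (Fin n) (Fin n) ℂ) ∧ (fun M => U * M * Uᴴ) '' B = B}

namespace FibersAux

variable {n r : ℕ}

/-- The minimal projection of `Bf` corresponding to index `m`. -/
def P (f : Fin n → Fin r) (m : Fin r) : Matrix (Fin n) (Fin n) ℂ :=
  Matrix.diagonal (fun x => if f x = m then (1 : ℂ) else 0)

lemma P_mem (f : Fin n → Fin r) (m : Fin r) : P f m ∈ Bf n r f :=
  ⟨fun i => if i = m then 1 else 0, rfl⟩

lemma P_mul_P (f : Fin n → Fin r) (m : Fin r) : P f m * P f m = P f m := by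
  unfold P
  rw [Matrix.diagonal_mul_diagonal]
  exact congrArg Matrix.diagonal (funext fun x => by by_cases h : f x = m <;> simp [h])

lemma star_mem_normalizer {U : Matrix (Fin n) (Fin n) ℂ} {B : Set (Matrix (Fin n) (Fin n) ℂ)}
    (hU : U ∈ matrixNormalizer n B) : Uᴴ ∈ matrixNormalizer n B := by
  obtain ⟨hU1, hU2⟩ := hU
  have h1 : Uᴴ * U = 1 := by
    have := (Unitary.mem_iff.mp hU1).1
    rwa [Matrix.star_eq_conjTranspose] at this
  refine ⟨?_, ?_⟩
  · have := Unitary.star_mem hU1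
    rwa [Matrix.star_eq_conjTranspose] at this
  · have : (fun M => Uᴴ * M * Uᴴᴴ) '' ((fun M => U * M * Uᴴ) '' B) = B := by
      rw [Set.image_image]
      have heq : ∀ M : Matrix (Fin n) (Fin n) ℂ, Uᴴ * (U * M * Uᴴ) * Uᴴᴴ = M := by
        intro M
        rw [Matrix.conjTranspose_conjTranspose]
        calc Uᴴ * (U * M * Uᴴ) * U = (Uᴴ * U) * M * (Uᴴ * U) := by noncomm_ring
        _ = M := by rw [h1, one_mul, mul_one]
      simp only [heq, Set.image_id']
    rw [hU2] at this
    exact this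

/-- Conjugating a projection `P f m` by a normalizer unitary gives a diagonal
matrix `diagonal (c ∘ f)` with idempotent coefficients. -/
lemma exists_coeff (f : Fin n → Fin r) (hf : Function.Surjective f)
    {U : Matrix (Fin n) (Fin n) ℂ} (hU : U ∈ matrixNormalizer n (Bf n r f)) (m : Fin r) :
    ∃ c : Fin r → ℂ, (∀ i, c i * c i = c i) ∧ U * P f m * Uᴴ = Matrix.diagonal (c ∘ f) := by
  obtain ⟨hU1, hU2⟩ := hU
  have h1 : Uᴴ * U = 1 := by
    have := (Unitary.mem_iff.mp hU1).1
    rwa [Matrix.star_eq_conjTranspose] at this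
  have hmem : U * P f m * Uᴴ ∈ Bf n r f := by
    rw [← hU2]; exact Set.mem_image_of_mem _ (P_mem f m)
  obtain ⟨c, hc⟩ := hmem
  refine ⟨c, ?_, hc⟩
  have hidem : (U * P f m * Uᴴ) * (U * P f m * Uᴴ) = U * P f m * Uᴴ := by
    calc (U * P f m * Uᴴ) * (U * P f m * Uᴴ)
        = U * P f m * (Uᴴ * U) * P f m * Uᴴ := by noncomm_ring
    _ = U * (P f m * P f m) * Uᴴ := by rw [h1]; noncomm_ring
    _ = U * P f m * Uᴴ := by rw [P_mul_P]
  rw [hc, Matrix.diagonal_mul_diagonal] at hidem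
  have hfn := Matrix.diagonal_injective hidem
  intro i
  obtain ⟨x, hx⟩ := hf i
  have := congrFun hfn x
  simpa [hx] using this

lemma trace_P_mul_diag (f : Fin n → Fin r) (m : Fin r) (c : Fin r → ℂ) :
    Matrix.trace (P f m * Matrix.diagonal (c ∘ f)) =
      ((Finset.univ.filter fun x => f x = m).card : ℂ) * c m := by
  unfold P
  rw [Matrix.diagonal_mul_diagonal, Matrix.trace_diagonal]
  have h : ∀ x : Fin n, (if f x = m then (1:ℂ) else 0) * (c ∘ f) x
      = if f x = m then c m else 0 := by
    intro x
    by_cases h : f x = m <;> simp [h]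
  rw [Finset.sum_congr rfl fun x _ => h x, ← Finset.sum_filter, Finset.sum_const,
    nsmul_eq_mul]

lemma trace_diag_mul_P (f : Fin n → Fin r) (m : Fin r) (c : Fin r → ℂ) :
    Matrix.trace (Matrix.diagonal (c ∘ f) * P f m) =
      ((Finset.univ.filter fun x => f x = m).card : ℂ) * c m := by
  rw [Matrix.trace_mul_comm, trace_P_mul_diag]

lemma zero_or_one {a : ℂ} (ha : a * a = a) : a = 0 ∨ a = 1 := by
  have h : a * (a - 1) = 0 := by linear_combination ha
  rcases mul_eq_zero.mp h with h | h
  · exact Or.inl h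
  · exact Or.inr (sub_eq_zero.mp h)

end FibersAux

open FibersAux in
/-- if the inclusion `B_f ⊆ M_n(ℂ)` is regular then all fibers of
`f` have the same cardinality, i.e. all entries of the inclusion matrix of
`ℂ^r ⊆ M_n(ℂ)` are equal. -/
theorem fibers_card_eq_of_regular (n r : ℕ) (hn : 1 ≤ n) (hr : 1 ≤ r)
    (f : Fin n → Fin r) (hf : Function.Surjective f)
    (hreg : Submodule.span ℂ (matrixNormalizer n (Bf n r f)) = ⊤) :
    ∀ j k : Fin r,
      (Finset.univ.filter fun x => f x = j).card =
      (Finset.univ.filter fun x => f x = k).card := by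
  intro j k
  by_contra hne
  set aj := (Finset.univ.filter fun x => f x = j).card with haj
  set ak := (Finset.univ.filter fun x => f x = k).card with hak
  have hajn : 0 < aj := by
    obtain ⟨x, hx⟩ := hf j
    exact Finset.card_pos.mpr ⟨x, by simp [hx]⟩
  -- Key: every normalizer element U satisfies P j * U * P k = 0
  have key : ∀ U ∈ matrixNormalizer n (Bf n r f), P f j * U * P f k = 0 := by
    intro U hU
    obtain ⟨c, hcidem, hc⟩ := exists_coeff f hf hU k
    obtain ⟨d, hdidem, hd⟩ := exists_coeff f hf (star_mem_normalizer hU) j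
    rw [Matrix.conjTranspose_conjTranspose] at hd
    have h1 : Uᴴ * U = 1 := by
      have := (Unitary.mem_iff.mp hU.1).1
      rwa [Matrix.star_eq_conjTranspose] at this
    have htr : (aj : ℂ) * c j = (ak : ℂ) * d k := by
      have e1 : Matrix.trace (P f j * (U * P f k * Uᴴ)) = (aj : ℂ) * c j := by
        rw [hc, trace_P_mul_diag]
      have e2 : Matrix.trace ((Uᴴ * P f j * U) * P f k) = (ak : ℂ) * d k := by
        rw [hd, trace_diag_mul_P]
      rw [← e1, ← e2]
      rw [show P f j * (U * P f k * Uᴴ) = (P f j * U * P f k) * Uᴴ from by noncomm_ring,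
        Matrix.trace_mul_comm,
        show Uᴴ * (P f j * U * P f k) = (Uᴴ * P f j * U) * P f k from by noncomm_ring]
    have hcj : c j = 0 := by
      rcases zero_or_one (hcidem j) with h | h
      · exact h
      rw [h, mul_one] at htr
      rcases zero_or_one (hdidem k) with h' | h'
      · rw [h', mul_zero] at htr
        exact absurd (Nat.cast_eq_zero.mp htr) hajn.ne'
      · rw [h', mul_one] at htr
        exact absurd (Nat.cast_injective htr) hne
    have hUP : U * P f k = Matrix.diagonal (c ∘ f) * U := by
      calc U * P f k = U * P f k * (Uᴴ * U) := by rw [h1, mul_one]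
      _ = (U * P f k * Uᴴ) * U := by noncomm_ring
      _ = Matrix.diagonal (c ∘ f) * U := by rw [hc]
    have hPD : P f j * Matrix.diagonal (c ∘ f) = 0 := by
      unfold P
      rw [Matrix.diagonal_mul_diagonal]
      have h0 : (fun x => (if f x = j then (1:ℂ) else 0) * (c ∘ f) x) = fun _ => 0 := by
        funext x
        by_cases h : f x = j <;> simp [h, hcj]
      rw [h0, Matrix.diagonal_zero]
    calc P f j * U * P f k = P f j * (U * P f k) := by noncomm_ring
    _ = P f j * Matrix.diagonal (c ∘ f) * U := by rw [hUP]; noncomm_ring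
    _ = 0 := by rw [hPD, zero_mul]
  -- The linear map M ↦ P j * M * P k kills the normalizer, hence everything
  set L : Matrix (Fin n) (Fin n) ℂ →ₗ[ℂ] Matrix (Fin n) (Fin n) ℂ :=
    (LinearMap.mulRight ℂ (P f k)).comp (LinearMap.mulLeft ℂ (P f j)) with hL
  have hker : Submodule.span ℂ (matrixNormalizer n (Bf n r f)) ≤ LinearMap.ker L := by
    rw [Submodule.span_le]
    intro U hU
    simp only [SetLike.mem_coe, LinearMap.mem_ker, hL, LinearMap.comp_apply,
      LinearMap.mulLeft_apply, LinearMap.mulRight_apply]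
    exact key U hU
  rw [hreg, top_le_iff] at hker
  obtain ⟨x, hx⟩ := hf j
  obtain ⟨y, hy⟩ := hf k
  have hLE : L (Matrix.single x y 1) = 0 := by
    rw [← LinearMap.mem_ker, hker]; trivial
  have hmat : P f j * Matrix.single x y 1 * P f k = 0 := by
    simpa [hL, LinearMap.mulRight_apply, LinearMap.mulLeft_apply] using hLE
  unfold P at hmat
  have hentry := congrFun (congrFun hmat x) y
  rw [Matrix.mul_diagonal, Matrix.diagonal_mul] at hentry
  simp [hx, hy] at hentry
end

section
/- Let r, n₀, n₁ ≥ 1 and let f₀ : Fin n₀ → Fin r and f₁ : Fin n₁ → Fin r be functions such that every j : Fin r lies in range f₀ ∪ range f₁. Let B ⊆ Matrix (Fin n₀) (Fin n₀) ℂ × Matrix (Fin n₁) (Fin n₁) ℂ be the unital subalgebra of all pairs (Matrix.diagonal (c ∘ f₀), Matrix.diagonal (c ∘ f₁)) with c : Fin r → ℂ (this realizes a copy of ℂ^r inside M_{n₀}(ℂ) ⊕ M_{n₁}(ℂ)). If the inclusion B ⊆ M_{n₀}(ℂ) × M_{n₁}(ℂ) is regular, then the ranges of f₀ and f₁ are either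 equal or disjoint: Set.range f₀ = Set.range f₁ or Set.range f₀ ∩ Set.range f₁ = ∅. -/
open Matrix

section Aux

variable {r n₀ n₁ : ℕ}

/-- The diagonal embedding of `ℂ^r`. -/
private def iota (f₀ : Fin n₀ → Fin r) (f₁ : Fin n₁ → Fin r) (c : Fin r → ℂ) :
    Matrix (Fin n₀) (Fin n₀) ℂ × Matrix (Fin n₁) (Fin n₁) ℂ :=
  (Matrix.diagonal (c ∘ f₀), Matrix.diagonal (c ∘ f₁))

private lemma iota_injective (f₀ : Fin n₀ → Fin r) (f₁ : Fin n₁ → Fin r)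
    (hcover : ∀ j : Fin r, j ∈ Set.range f₀ ∪ Set.range f₁) :
    Function.Injective (iota f₀ f₁) := by
  intro c c' h
  have h0 : Matrix.diagonal (c ∘ f₀) = Matrix.diagonal (c' ∘ f₀) := congrArg Prod.fst h
  have h1 : Matrix.diagonal (c ∘ f₁) = Matrix.diagonal (c' ∘ f₁) := congrArg Prod.snd h
  have e0 := Matrix.diagonal_injective h0
  have e1 := Matrix.diagonal_injective h1
  funext j
  rcases hcover j with ⟨a, ha⟩ | ⟨a, ha⟩
  · have := congrFun e0 a; simpa [ha] using this
  · have := congrFun e1 a; simpa [ha] using this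

private lemma iota_mul (f₀ : Fin n₀ → Fin r) (f₁ : Fin n₁ → Fin r) (c c' : Fin r → ℂ) :
    iota f₀ f₁ c * iota f₀ f₁ c' = iota f₀ f₁ (c * c') := by
  simp only [iota, Prod.mk_mul_mk, Matrix.diagonal_mul_diagonal]
  rfl

private lemma iota_one (f₀ : Fin n₀ → Fin r) (f₁ : Fin n₁ → Fin r) :
    iota f₀ f₁ 1 = 1 := by
  have h0 : ((1 : Fin r → ℂ) ∘ f₀) = 1 := rfl
  have h1 : ((1 : Fin r → ℂ) ∘ f₁) = 1 := rfl
  simp only [iota, h0, h1, Matrix.diagonal_one]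
  rfl

private lemma iota_zero (f₀ : Fin n₀ → Fin r) (f₁ : Fin n₁ → Fin r) :
    iota f₀ f₁ 0 = 0 := by
  have h0 : ((0 : Fin r → ℂ) ∘ f₀) = (fun _ => 0) := rfl
  have h1 : ((0 : Fin r → ℂ) ∘ f₁) = (fun _ => 0) := rfl
  simp only [iota, h0, h1, Matrix.diagonal_zero]
  rfl

private lemma diagonal_sum {n : ℕ} (s : Finset (Fin r)) (v : Fin r → Fin n → ℂ) :
    Matrix.diagonal (∑ j ∈ s, v j) = ∑ j ∈ s, Matrix.diagonal (v j) := by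
  ext a b
  by_cases hab : a = b
  · subst hab
    simp [Matrix.sum_apply, Matrix.diagonal_apply, Finset.sum_apply]
  · simp [Matrix.sum_apply, Matrix.diagonal_apply, hab]

private lemma iota_sum (f₀ : Fin n₀ → Fin r) (f₁ : Fin n₁ → Fin r)
    (s : Finset (Fin r)) (v : Fin r → Fin r → ℂ) :
    iota f₀ f₁ (∑ j ∈ s, v j) = ∑ j ∈ s, iota f₀ f₁ (v j) := by
  have h0 : ((∑ j ∈ s, v j) ∘ f₀) = ∑ j ∈ s, (v j ∘ f₀) := by
    funext a; simp [Finset.sum_apply]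
  have h1 : ((∑ j ∈ s, v j) ∘ f₁) = ∑ j ∈ s, (v j ∘ f₁) := by
    funext a; simp [Finset.sum_apply]
  simp only [iota, h0, h1, diagonal_sum]
  ext <;> simp [Prod.fst_sum, Prod.snd_sum]

/-- Key structural lemma for a normalizing unitary. -/
private lemma key (f₀ : Fin n₀ → Fin r) (f₁ : Fin n₁ → Fin r)
    (hcover : ∀ j : Fin r, j ∈ Set.range f₀ ∪ Set.range f₁)
    (u : Matrix (Fin n₀) (Fin n₀) ℂ × Matrix (Fin n₁) (Fin n₁) ℂ)
    (hu : u ∈ unitary (Matrix (Fin n₀) (Fin n₀) ℂ × Matrix (Fin n₁) (Fin n₁) ℂ))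
    (hBu : (fun x => u * x * star u) ''
        {x | ∃ c : Fin r → ℂ, x = (Matrix.diagonal (c ∘ f₀), Matrix.diagonal (c ∘ f₁))}
      = {x | ∃ c : Fin r → ℂ, x = (Matrix.diagonal (c ∘ f₀), Matrix.diagonal (c ∘ f₁))}) :
    ∃ g : Fin r → Fin r,
      (∀ k, k ∉ Set.range f₀ → g k ∉ Set.range f₀) ∧
      (∀ k, k ∉ Set.range f₁ → g k ∉ Set.range f₁) ∧
      (∀ a b, g (f₀ a) ≠ f₀ b → u.1 a b = 0) ∧
      (∀ a b, g (f₁ a) ≠ f₁ b → u.2 a b = 0) := by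
  have h1 : star u * u = 1 := hu.1
  have h2 : u * star u = 1 := hu.2
  set ι := iota f₀ f₁ with hιdef
  have ιinj : Function.Injective ι := iota_injective f₀ f₁ hcover
  have ιmul : ∀ c c', ι c * ι c' = ι (c * c') := iota_mul f₀ f₁
  have ιone : ι 1 = 1 := iota_one f₀ f₁
  have ιzero : ι 0 = 0 := iota_zero f₀ f₁
  have ιsum : ∀ (s : Finset (Fin r)) (v : Fin r → Fin r → ℂ),
      ι (∑ j ∈ s, v j) = ∑ j ∈ s, ι (v j) := iota_sum f₀ f₁
  -- the minimal projections of B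
  set δ : Fin r → Fin r → ℂ := fun j => Pi.single j 1 with hδ
  have hδmul : ∀ j j', δ j * δ j' = if j = j' then δ j else 0 := by
    intro j j'
    by_cases hjj : j = j'
    · subst hjj
      rw [if_pos rfl]
      funext i
      by_cases hij : i = j <;> simp [hδ, Pi.single_apply, hij]
    · rw [if_neg hjj]
      funext i
      by_cases hij : i = j
      · have hij' : i ≠ j' := fun h => hjj (hij.symm.trans h)
        simp only [hδ, Pi.mul_apply, Pi.single_apply, if_pos hij, if_neg hij', Pi.zero_apply,
          mul_zero, ite_mul, one_mul, zero_mul, ite_self]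
      · simp [hδ, Pi.single_apply, hij]
  have hδsum : ∑ j, δ j = 1 := by
    funext i
    simp [hδ, Finset.sum_apply, Pi.single_apply]
  -- images of the minimal projections
  have hd : ∀ j : Fin r, ∃ dj : Fin r → ℂ, u * ι (δ j) * star u = ι dj := by
    intro j
    have hmem : ι (δ j) ∈ {x | ∃ c : Fin r → ℂ,
        x = (Matrix.diagonal (c ∘ f₀), Matrix.diagonal (c ∘ f₁))} := ⟨δ j, rfl⟩
    have : u * ι (δ j) * star u ∈ (fun x => u * x * star u) ''
        {x | ∃ c : Fin r → ℂ, x = (Matrix.diagonal (c ∘ f₀), Matrix.diagonal (c ∘ f₁))} :=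
      ⟨_, hmem, rfl⟩
    rw [hBu] at this
    exact this
  choose d hdd using hd
  -- conjugation is multiplicative
  have hcancel : ∀ t : Matrix (Fin n₀) (Fin n₀) ℂ × Matrix (Fin n₁) (Fin n₁) ℂ,
      star u * (u * t) = t := fun t => by rw [← mul_assoc, h1, one_mul]
  have hconj : ∀ x y : Matrix (Fin n₀) (Fin n₀) ℂ × Matrix (Fin n₁) (Fin n₁) ℂ,
      (u * x * star u) * (u * y * star u) = u * (x * y) * star u := by
    intro x y
    simp only [mul_assoc]
    rw [hcancel]
  -- idempotency
  have didem : ∀ j i, d j i = 0 ∨ d j i = 1 := by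
    intro j i
    have hmul : ι (d j * d j) = ι (d j) := by
      rw [← ιmul, ← hdd j, hconj, ιmul, hδmul, if_pos rfl, hdd j]
    have hdj : d j * d j = d j := ιinj hmul
    have hpt : d j i * d j i = d j i := congrFun hdj i
    have h' : d j i * (d j i - 1) = 0 := by ring_nf; linear_combination hpt
    rcases mul_eq_zero.mp h' with h | h
    · exact Or.inl h
    · exact Or.inr (sub_eq_zero.mp h)
  -- orthogonality
  have dorth : ∀ j j', j ≠ j' → d j * d j' = 0 := by
    intro j j' hne
    have hmul : ι (d j * d j') = ι 0 := by
      rw [← ιmul, ← hdd j, ← hdd j', hconj, ιmul, hδmul, if_neg hne, ιzero,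
        mul_zero, zero_mul]
    exact ιinj hmul
  -- sum to one
  have dsum : ∀ i, ∑ j, d j i = 1 := by
    intro i
    have hsum : ι (∑ j, d j) = ι 1 := by
      rw [ιsum]
      have : ∀ j ∈ Finset.univ, ι (d j) = u * ι (δ j) * star u := fun j _ => (hdd j).symm
      rw [Finset.sum_congr rfl this]
      have : ∑ j : Fin r, u * ι (δ j) * star u = u * (∑ j, ι (δ j)) * star u := by
        rw [Finset.mul_sum, Finset.sum_mul]
      rw [this, ← ιsum, hδsum, ιone, mul_one, h2]
    have := ιinj hsum
    have := congrFun this i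
    simpa [Finset.sum_apply] using this
  -- the permutation
  have hex : ∀ i, ∃ j, d j i = 1 := by
    intro i
    have hs : ∑ j, d j i ≠ 0 := by rw [dsum i]; exact one_ne_zero
    obtain ⟨j, _, hj⟩ := Finset.exists_ne_zero_of_sum_ne_zero hs
    exact ⟨j, (didem j i).resolve_left hj⟩
  choose g hg using hex
  have dval : ∀ j i, d j i = if g i = j then 1 else 0 := by
    intro j i
    by_cases h : g i = j
    · subst h; simp [hg i]
    · have horth := congrFun (dorth j (g i) (fun hh => h hh.symm)) i
      simp only [Pi.mul_apply, Pi.zero_apply, hg i, mul_one] at horth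
      simp [h, horth]
  -- entry relations
  have hswap : ∀ j, u * ι (δ j) = ι (d j) * u := by
    intro j
    calc u * ι (δ j) = u * ι (δ j) * (star u * u) := by rw [h1, mul_one]
      _ = (u * ι (δ j) * star u) * u := by rw [mul_assoc (u * ι (δ j))]
      _ = ι (d j) * u := by rw [hdd j]
  have entry₀ : ∀ a b, g (f₀ a) ≠ f₀ b → u.1 a b = 0 := by
    intro a b hne
    have h := congrArg Prod.fst (hswap (f₀ b))
    simp only [Prod.fst_mul] at h
    have he : (u.1 * Matrix.diagonal (δ (f₀ b) ∘ f₀)) a b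
        = (Matrix.diagonal (d (f₀ b) ∘ f₀) * u.1) a b := by
      rw [show (ι (δ (f₀ b))).1 = Matrix.diagonal (δ (f₀ b) ∘ f₀) from rfl,
        show (ι (d (f₀ b))).1 = Matrix.diagonal (d (f₀ b) ∘ f₀) from rfl] at h
      rw [h]
    rw [Matrix.mul_diagonal, Matrix.diagonal_mul] at he
    have hδone : (δ (f₀ b) ∘ f₀) b = 1 := by simp [hδ]
    rw [hδone, mul_one] at he
    have : (d (f₀ b) ∘ f₀) a = 0 := by
      simp only [Function.comp_apply, dval, if_neg hne]
    rw [this, zero_mul] at he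
    exact he
  have entry₁ : ∀ a b, g (f₁ a) ≠ f₁ b → u.2 a b = 0 := by
    intro a b hne
    have h := congrArg Prod.snd (hswap (f₁ b))
    simp only [Prod.snd_mul] at h
    have he : (u.2 * Matrix.diagonal (δ (f₁ b) ∘ f₁)) a b
        = (Matrix.diagonal (d (f₁ b) ∘ f₁) * u.2) a b := by
      rw [show (ι (δ (f₁ b))).2 = Matrix.diagonal (δ (f₁ b) ∘ f₁) from rfl,
        show (ι (d (f₁ b))).2 = Matrix.diagonal (d (f₁ b) ∘ f₁) from rfl] at h
      rw [h]
    rw [Matrix.mul_diagonal, Matrix.diagonal_mul] at he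
    have hδone : (δ (f₁ b) ∘ f₁) b = 1 := by simp [hδ]
    rw [hδone, mul_one] at he
    have : (d (f₁ b) ∘ f₁) a = 0 := by
      simp only [Function.comp_apply, dval, if_neg hne]
    rw [this, zero_mul] at he
    exact he
  -- trace identities
  have h1fst : star u.1 * u.1 = 1 := by
    have := congrArg Prod.fst h1
    simpa [Prod.fst_mul, Prod.fst_star] using this
  have h1snd : star u.2 * u.2 = 1 := by
    have := congrArg Prod.snd h1
    simpa [Prod.snd_mul, Prod.snd_star] using this
  have hcard₀ : ∀ j, (Finset.univ.filter fun a => g (f₀ a) = j).card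
      = (Finset.univ.filter fun a => f₀ a = j).card := by
    intro j
    have h := congrArg Prod.fst (hdd j)
    simp only [Prod.fst_mul, Prod.fst_star] at h
    rw [show (ι (δ j)).1 = Matrix.diagonal (δ j ∘ f₀) from rfl,
      show (ι (d j)).1 = Matrix.diagonal (d j ∘ f₀) from rfl] at h
    have ht := congrArg Matrix.trace h
    rw [Matrix.trace_mul_cycle, h1fst, one_mul,
      Matrix.trace_diagonal, Matrix.trace_diagonal] at ht
    have e1 : ∑ a, (δ j ∘ f₀) a
        = ((Finset.univ.filter fun a => f₀ a = j).card : ℂ) := by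
      rw [← Finset.sum_boole]
      exact Finset.sum_congr rfl fun a _ => by simp [hδ, Pi.single_apply]
    have e2 : ∑ a, (d j ∘ f₀) a
        = ((Finset.univ.filter fun a => g (f₀ a) = j).card : ℂ) := by
      rw [← Finset.sum_boole]
      exact Finset.sum_congr rfl fun a _ => by simp [dval]
    rw [e1, e2] at ht
    exact_mod_cast ht.symm
  have hcard₁ : ∀ j, (Finset.univ.filter fun a => g (f₁ a) = j).card
      = (Finset.univ.filter fun a => f₁ a = j).card := by
    intro j
    have h := congrArg Prod.snd (hdd j)
    simp only [Prod.snd_mul, Prod.snd_star] at h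
    rw [show (ι (δ j)).2 = Matrix.diagonal (δ j ∘ f₁) from rfl,
      show (ι (d j)).2 = Matrix.diagonal (d j ∘ f₁) from rfl] at h
    have ht := congrArg Matrix.trace h
    rw [Matrix.trace_mul_cycle, h1snd, one_mul,
      Matrix.trace_diagonal, Matrix.trace_diagonal] at ht
    have e1 : ∑ a, (δ j ∘ f₁) a
        = ((Finset.univ.filter fun a => f₁ a = j).card : ℂ) := by
      rw [← Finset.sum_boole]
      exact Finset.sum_congr rfl fun a _ => by simp [hδ, Pi.single_apply]
    have e2 : ∑ a, (d j ∘ f₁) a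
        = ((Finset.univ.filter fun a => g (f₁ a) = j).card : ℂ) := by
      rw [← Finset.sum_boole]
      exact Finset.sum_congr rfl fun a _ => by simp [dval]
    rw [e1, e2] at ht
    exact_mod_cast ht.symm
  -- g is surjective, hence injective
  have gsurj : Function.Surjective g := by
    intro j
    rcases hcover j with ⟨a, ha⟩ | ⟨a, ha⟩
    · have hpos : 0 < (Finset.univ.filter fun a => f₀ a = j).card :=
        Finset.card_pos.mpr ⟨a, by simp [ha]⟩
      rw [← hcard₀ j] at hpos
      obtain ⟨a', ha'⟩ := Finset.card_pos.mp hpos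
      exact ⟨f₀ a', (Finset.mem_filter.mp ha').2⟩
    · have hpos : 0 < (Finset.univ.filter fun a => f₁ a = j).card :=
        Finset.card_pos.mpr ⟨a, by simp [ha]⟩
      rw [← hcard₁ j] at hpos
      obtain ⟨a', ha'⟩ := Finset.card_pos.mp hpos
      exact ⟨f₁ a', (Finset.mem_filter.mp ha').2⟩
  have ginj : Function.Injective g := Finite.injective_iff_surjective.mpr gsurj
  -- range preservation
  have hrange₀ : ∀ k, k ∉ Set.range f₀ → g k ∉ Set.range f₀ := by
    intro k hk ⟨a, ha⟩
    have hz : (Finset.univ.filter fun a => g (f₀ a) = g k).card = 0 := by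
      rw [Finset.card_eq_zero, Finset.filter_eq_empty_iff]
      intro a' _
      exact fun hh => hk ⟨a', ginj hh⟩
    have hnz : 0 < (Finset.univ.filter fun a' => f₀ a' = g k).card :=
      Finset.card_pos.mpr ⟨a, by simp [ha]⟩
    rw [← hcard₀ (g k), hz] at hnz
    exact absurd hnz (lt_irrefl 0)
  have hrange₁ : ∀ k, k ∉ Set.range f₁ → g k ∉ Set.range f₁ := by
    intro k hk ⟨a, ha⟩
    have hz : (Finset.univ.filter fun a => g (f₁ a) = g k).card = 0 := by
      rw [Finset.card_eq_zero, Finset.filter_eq_empty_iff]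
      intro a' _
      exact fun hh => hk ⟨a', ginj hh⟩
    have hnz : 0 < (Finset.univ.filter fun a' => f₁ a' = g k).card :=
      Finset.card_pos.mpr ⟨a, by simp [ha]⟩
    rw [← hcard₁ (g k), hz] at hnz
    exact absurd hnz (lt_irrefl 0)
  exact ⟨g, hrange₀, hrange₁, entry₀, entry₁⟩

end Aux

/-- for the diagonal copy of `ℂ^r` inside
`M_{n₀}(ℂ) ⊕ M_{n₁}(ℂ)` determined by `f₀, f₁`, regularity forces the two row
supports (the ranges of `f₀` and `f₁`) to be equal or disjoint. -/
theorem ranges_eq_or_disjoint_of_regular (r n₀ n₁ : ℕ)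
    (hr : 1 ≤ r) (hn₀ : 1 ≤ n₀) (hn₁ : 1 ≤ n₁)
    (f₀ : Fin n₀ → Fin r) (f₁ : Fin n₁ → Fin r)
    (hcover : ∀ j : Fin r, j ∈ Set.range f₀ ∪ Set.range f₁)
    (B : Set (Matrix (Fin n₀) (Fin n₀) ℂ × Matrix (Fin n₁) (Fin n₁) ℂ))
    (hB : B = {x | ∃ c : Fin r → ℂ,
      x = (Matrix.diagonal (c ∘ f₀), Matrix.diagonal (c ∘ f₁))})
    (hreg : Submodule.span ℂ
      {u : Matrix (Fin n₀) (Fin n₀) ℂ × Matrix (Fin n₁) (Fin n₁) ℂ |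
        u ∈ unitary (Matrix (Fin n₀) (Fin n₀) ℂ × Matrix (Fin n₁) (Fin n₁) ℂ) ∧
        (fun x => u * x * star u) '' B = B} = ⊤) :
    Set.range f₀ = Set.range f₁ ∨ Set.range f₀ ∩ Set.range f₁ = ∅ := by
  subst hB
  by_contra hcon
  push_neg at hcon
  obtain ⟨hne, hint⟩ := hcon
  obtain ⟨p, hp⟩ := hint
  have hp₀ : p ∈ Set.range f₀ := hp.1
  have hp₁ : p ∈ Set.range f₁ := hp.2
  have hcases : (∃ k, k ∈ Set.range f₀ ∧ k ∉ Set.range f₁)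
      ∨ (∃ k, k ∈ Set.range f₁ ∧ k ∉ Set.range f₀) := by
    by_contra hc
    push_neg at hc
    exact hne (Set.Subset.antisymm (fun x hx => hc.1 x hx) (fun x hx => hc.2 x hx))
  rcases hcases with ⟨k, hk₀, hk₁⟩ | ⟨k, hk₁, hk₀⟩
  · obtain ⟨a, ha⟩ := hk₀
    obtain ⟨b, hb⟩ := hp₀
    let φ : (Matrix (Fin n₀) (Fin n₀) ℂ × Matrix (Fin n₁) (Fin n₁) ℂ) →ₗ[ℂ] ℂ :=
      { toFun := fun x => x.1 a b
        map_add' := fun x y => rfl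
        map_smul' := fun m x => rfl }
    have htop : (⊤ : Submodule ℂ (Matrix (Fin n₀) (Fin n₀) ℂ × Matrix (Fin n₁) (Fin n₁) ℂ))
        ≤ LinearMap.ker φ := by
      rw [← hreg]
      apply Submodule.span_le.mpr
      intro u hu
      obtain ⟨g, hg₀, hg₁, he₀, he₁⟩ := key f₀ f₁ hcover u hu.1 hu.2
      have : u.1 a b = 0 := by
        apply he₀ a b
        rw [ha, hb]
        exact fun h => (hg₁ k hk₁) (h ▸ hp₁)
      exact this
    have hzero : φ (Matrix.single a b 1, 0) = 0 :=
      htop Submodule.mem_top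
    have hone : φ (Matrix.single a b 1, 0) = 1 := by
      exact Matrix.single_apply_same a b 1
    rw [hone] at hzero
    exact one_ne_zero hzero
  · obtain ⟨a, ha⟩ := hk₁
    obtain ⟨b, hb⟩ := hp₁
    let φ : (Matrix (Fin n₀) (Fin n₀) ℂ × Matrix (Fin n₁) (Fin n₁) ℂ) →ₗ[ℂ] ℂ :=
      { toFun := fun x => x.2 a b
        map_add' := fun x y => rfl
        map_smul' := fun m x => rfl }
    have htop : (⊤ : Submodule ℂ (Matrix (Fin n₀) (Fin n₀) ℂ × Matrix (Fin n₁) (Fin n₁) ℂ))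
        ≤ LinearMap.ker φ := by
      rw [← hreg]
      apply Submodule.span_le.mpr
      intro u hu
      obtain ⟨g, hg₀, hg₁, he₀, he₁⟩ := key f₀ f₁ hcover u hu.1 hu.2
      have : u.2 a b = 0 := by
        apply he₁ a b
        rw [ha, hb]
        exact fun h => (hg₀ k hk₀) (h ▸ hp₀)
      exact this
    have hzero : φ (0, Matrix.single a b 1) = 0 :=
      htop Submodule.mem_top
    have hone : φ (0, Matrix.single a b 1) = 1 := by
      exact Matrix.single_apply_same a b 1
    rw [hone] at hzero
    exact one_ne_zero hzero
end

section
/- Let s, r ≥ 1, n : Fin s → ℕ with n i ≥ 1 for all i, and let f : (i : Fin s) → Fin (n i) → Fin r be a family of functions such that every j : Fin r lies in the range of some f i. Let A := Π i : Fin s, Matrix (Fin (n i)) (Fin (n i)) ℂ with pointwise star-algebra structure, and let B ⊆ A be the unital subalgebra of all elements of the form (fun i => Matrix.diagonal (c ∘ f i)) with c : Fin r → ℂ (this realizes the commutative inclusion ℂ^r ⊆ ⊕_i M_{n i}(ℂ), whose inclusion matrix has entries a i j = |(f i)⁻¹({j})|). Then the inclusion B ⊆ A is regular if and only if both of the following hold: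 (1) for every i : Fin s and all j, k in the range of f i, the fibers (f i)⁻¹({j}) and (f i)⁻¹({k}) have the same cardinality (all nonzero entries in each row of the inclusion matrix are equal); and (2) for all i, i' : Fin s, the ranges of f i and f i' are either equal or disjoint (the row supports of the inclusion matrix are equal or disjoint). That is, B ⊆ A is regular precisely when the inclusion matrix is a normalizer matrix. -/
open Matrix

namespace Reg9

-- per-block equiv matching fibers along σ
lemma exists_fiber_equiv {N r : ℕ} (g : Fin N → Fin r) (σ : Equiv.Perm (Fin r))
    (h : ∀ m, (Finset.univ.filter fun x => g x = m).card
        = (Finset.univ.filter fun x => g x = σ m).card) :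
    ∃ e : Fin N ≃ Fin N, ∀ x, g (e x) = σ (g x) := by
  have key : ∀ c : Fin r, Fintype.card {a // σ (g a) = c} = Fintype.card {b // g b = c} := by
    intro c
    rw [Fintype.card_subtype, Fintype.card_subtype]
    have h1 : (Finset.univ.filter fun x => σ (g x) = c)
        = (Finset.univ.filter fun x => g x = σ.symm c) := by
      apply Finset.filter_congr
      intro x _
      rw [Equiv.eq_symm_apply]
    rw [h1, h (σ.symm c), Equiv.apply_symm_apply]
  refine ⟨Equiv.ofFiberEquiv (f := fun x => σ (g x)) (g := g)
    (fun c => Fintype.equivOfCardEq (key c)), fun x => ?_⟩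
  exact Equiv.ofFiberEquiv_map _ x


variable {s r : ℕ} {n : Fin s → ℕ}

def mono (E : ∀ i, Fin (n i) ≃ Fin (n i)) (D : ∀ i, Fin (n i) → ℂ) :
    ∀ i, Matrix (Fin (n i)) (Fin (n i)) ℂ :=
  fun i => Matrix.of fun a b => if a = E i b then D i b else 0

lemma mono_mem_unitary (E : ∀ i, Fin (n i) ≃ Fin (n i)) (D : ∀ i, Fin (n i) → ℂ)
    (hD : ∀ i b, D i b * star (D i b) = 1) :
    mono E D ∈ unitary (∀ i, Matrix (Fin (n i)) (Fin (n i)) ℂ) := by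
  constructor
  · funext i
    ext a c
    show (star (mono E D i) * mono E D i) a c = (1 : Matrix _ _ ℂ) a c
    rw [Matrix.mul_apply]
    rw [Finset.sum_eq_single (E i a)]
    · simp only [mono, Matrix.star_apply, Matrix.of_apply]
      by_cases h : a = c
      · subst h
        simp [mul_comm]
        simpa using hD i a
      · have : ¬ (E i a = E i c) := fun hh => h (( E i).injective hh)
        simp [this, Matrix.one_apply, h]
    · intro b _ hb
      simp only [mono, Matrix.star_apply, Matrix.of_apply]
      rw [if_neg (fun hh => hb (by rw [hh]))]
      simp
    · intro h; exact absurd (Finset.mem_univ _) h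
  · funext i
    ext a c
    show (mono E D i * star (mono E D i)) a c = (1 : Matrix _ _ ℂ) a c
    rw [Matrix.mul_apply]
    rw [Finset.sum_eq_single ((E i).symm a)]
    · simp only [mono, Matrix.star_apply, Matrix.of_apply, Equiv.apply_symm_apply]
      by_cases h : a = c
      · subst h
        simpa using hD i ((E i).symm a)
      · simp [Matrix.one_apply, h, Ne.symm h]
    · intro b _ hb
      simp only [mono, Matrix.star_apply, Matrix.of_apply]
      rw [if_neg (fun hh => hb (by rw [hh, Equiv.symm_apply_apply]))]
      simp
    · intro h; exact absurd (Finset.mem_univ _) h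


def bdiag (f : (i : Fin s) → Fin (n i) → Fin r) (c : Fin r → ℂ) :
    ∀ i, Matrix (Fin (n i)) (Fin (n i)) ℂ :=
  fun i => Matrix.diagonal (c ∘ f i)

lemma mono_mul_bdiag (f : (i : Fin s) → Fin (n i) → Fin r)
    (E : ∀ i, Fin (n i) ≃ Fin (n i)) (D : ∀ i, Fin (n i) → ℂ)
    (σ : Equiv.Perm (Fin r)) (hE : ∀ i x, f i (E i x) = σ (f i x))
    (c : Fin r → ℂ) :
    mono E D * bdiag f c = bdiag f (c ∘ σ.symm) * mono E D := by
  funext i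
  show mono E D i * (bdiag f c) i = (bdiag f (c ∘ σ.symm)) i * mono E D i
  ext a b
  simp only [bdiag]
  rw [Matrix.mul_diagonal, Matrix.diagonal_mul]
  simp only [mono, Matrix.of_apply, Function.comp_apply]
  by_cases h : a = E i b
  · subst h
    rw [if_pos rfl, hE i b, Equiv.symm_apply_apply, mul_comm]
  · rw [if_neg h, mul_zero, zero_mul]

lemma mono_mem_N (f : (i : Fin s) → Fin (n i) → Fin r)
    (E : ∀ i, Fin (n i) ≃ Fin (n i)) (D : ∀ i, Fin (n i) → ℂ)
    (hD : ∀ i b, D i b * star (D i b) = 1)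
    (σ : Equiv.Perm (Fin r)) (hE : ∀ i x, f i (E i x) = σ (f i x)) :
    mono E D ∈ {u : ∀ i, Matrix (Fin (n i)) (Fin (n i)) ℂ |
        u ∈ unitary (∀ i, Matrix (Fin (n i)) (Fin (n i)) ℂ) ∧
        (fun a => u * a * star u) ''
          {a | ∃ c : Fin r → ℂ, a = fun i => Matrix.diagonal (c ∘ f i)}
          = {a | ∃ c : Fin r → ℂ, a = fun i => Matrix.diagonal (c ∘ f i)}} := by
  have hu := mono_mem_unitary E D hD
  have huu : mono E D * star (mono E D) = 1 := hu.2
  have key : ∀ c : Fin r → ℂ, mono E D * bdiag f c * star (mono E D) = bdiag f (c ∘ σ.symm) := by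
    intro c
    rw [mono_mul_bdiag f E D σ hE c, mul_assoc, huu, mul_one]
  refine ⟨hu, ?_⟩
  ext a
  constructor
  · rintro ⟨b, ⟨c, rfl⟩, rfl⟩
    refine ⟨c ∘ σ.symm, ?_⟩
    have h1 : (fun i => Matrix.diagonal (c ∘ f i)) = bdiag f c := rfl
    rw [h1]
    show mono E D * bdiag f c * star (mono E D) = _
    rw [key c]
    rfl
  · rintro ⟨c, rfl⟩
    refine ⟨bdiag f (c ∘ σ), ⟨c ∘ σ, rfl⟩, ?_⟩
    show mono E D * bdiag f (c ∘ ⇑σ) * star (mono E D) = _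
    rw [key (c ∘ ⇑σ)]
    have h2 : (c ∘ ⇑σ) ∘ ⇑σ.symm = c := by
      funext m; simp
    rw [h2]
    rfl


lemma card_fib_zero {N : ℕ} {r : ℕ} (g : Fin N → Fin r) (m : Fin r)
    (h : m ∉ Set.range g) : (Finset.univ.filter fun x => g x = m).card = 0 := by
  rw [Finset.card_eq_zero, Finset.filter_eq_empty_iff]
  intro x _
  exact fun hx => h ⟨x, hx⟩

lemma card_fib_pos {N : ℕ} {r : ℕ} (g : Fin N → Fin r) (m : Fin r)
    (h : m ∈ Set.range g) : 0 < (Finset.univ.filter fun x => g x = m).card := by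
  obtain ⟨x, hx⟩ := h
  apply Finset.card_pos.2
  exact ⟨x, Finset.mem_filter.2 ⟨Finset.mem_univ x, hx⟩⟩

lemma swap_cards (f : (i : Fin s) → Fin (n i) → Fin r)
    (h1 : ∀ i : Fin s, ∀ j ∈ Set.range (f i), ∀ k ∈ Set.range (f i),
        (Finset.univ.filter fun x => f i x = j).card =
        (Finset.univ.filter fun x => f i x = k).card)
    (h2 : ∀ i i' : Fin s,
        Set.range (f i) = Set.range (f i') ∨
        Set.range (f i) ∩ Set.range (f i') = ∅)
    {i0 : Fin s} {j k : Fin r} (hj : j ∈ Set.range (f i0)) (hk : k ∈ Set.range (f i0)) :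
    ∀ i m, (Finset.univ.filter fun x => f i x = m).card
        = (Finset.univ.filter fun x => f i x = Equiv.swap j k m).card := by
  have hjk : ∀ i, (Finset.univ.filter fun x => f i x = j).card
      = (Finset.univ.filter fun x => f i x = k).card := by
    intro i
    by_cases hji : j ∈ Set.range (f i)
    · have hre : Set.range (f i) = Set.range (f i0) := by
        rcases h2 i i0 with h | h
        · exact h
        · exact absurd (Set.mem_inter hji hj) (by rw [h]; exact id)
      exact h1 i j hji k (hre ▸ hk)
    · have hki : k ∉ Set.range (f i) := by
        intro hki
        have hre : Set.range (f i) = Set.range (f i0) := by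
          rcases h2 i i0 with h | h
          · exact h
          · exact absurd (Set.mem_inter hki hk) (by rw [h]; exact id)
        exact hji (hre ▸ hj)
      rw [card_fib_zero _ _ hji, card_fib_zero _ _ hki]
  intro i m
  rcases eq_or_ne m j with rfl | hmj
  · rw [Equiv.swap_apply_left]
    exact hjk i
  rcases eq_or_ne m k with rfl | hmk
  · rw [Equiv.swap_apply_right]
    exact (hjk i).symm
  · rw [Equiv.swap_apply_of_ne_of_ne hmj hmk]


def Bset (f : (i : Fin s) → Fin (n i) → Fin r) :
    Set (∀ i, Matrix (Fin (n i)) (Fin (n i)) ℂ) :=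
  {a | ∃ c : Fin r → ℂ, a = fun i => Matrix.diagonal (c ∘ f i)}

def NSet (f : (i : Fin s) → Fin (n i) → Fin r) :
    Set (∀ i, Matrix (Fin (n i)) (Fin (n i)) ℂ) :=
  {u | u ∈ unitary (∀ i, Matrix (Fin (n i)) (Fin (n i)) ℂ) ∧
      (fun a => u * a * star u) '' Bset f = Bset f}

lemma single_mem_span (f : (i : Fin s) → Fin (n i) → Fin r)
    (h1 : ∀ i : Fin s, ∀ j ∈ Set.range (f i), ∀ k ∈ Set.range (f i),
        (Finset.univ.filter fun x => f i x = j).card =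
        (Finset.univ.filter fun x => f i x = k).card)
    (h2 : ∀ i i' : Fin s,
        Set.range (f i) = Set.range (f i') ∨
        Set.range (f i) ∩ Set.range (f i') = ∅)
    (i0 : Fin s) (x y : Fin (n i0)) :
    Pi.single i0 (Matrix.single x y 1) ∈ Submodule.span ℂ (NSet f) := by
  classical
  set σ : Equiv.Perm (Fin r) := Equiv.swap (f i0 x) (f i0 y) with hσ
  have hcards := swap_cards f h1 h2 ⟨x, rfl⟩ ⟨y, rfl⟩
  have hEex : ∀ i, ∃ e : Fin (n i) ≃ Fin (n i), ∀ z, f i (e z) = σ (f i z) :=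
    fun i => exists_fiber_equiv (f i) σ (hcards i)
  choose E0 hE0 using hEex
  have hfE0y : f i0 (E0 i0 y) = f i0 x := by
    rw [hE0 i0 y, hσ, Equiv.swap_apply_right]
  set E : ∀ i, Fin (n i) ≃ Fin (n i) :=
    Function.update E0 i0 ((E0 i0).trans (Equiv.swap (E0 i0 y) x)) with hEdef
  have hE : ∀ i z, f i (E i z) = σ (f i z) := by
    intro i z
    rcases eq_or_ne i i0 with h | hne
    · have h' := h.symm
      subst h'
      rw [hEdef, Function.update_self]
      show f i0 (Equiv.swap (E0 i0 y) x (E0 i0 z)) = _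
      rcases eq_or_ne (E0 i0 z) (E0 i0 y) with h | h
      · rw [h, Equiv.swap_apply_left, ← hfE0y, ← h]
        exact hE0 i0 z
      · rcases eq_or_ne (E0 i0 z) x with h' | h'
        · rw [h', Equiv.swap_apply_right, hfE0y, ← h']
          exact hE0 i0 z
        · rw [Equiv.swap_apply_of_ne_of_ne h h']
          exact hE0 i0 z
    · rw [hEdef, Function.update_of_ne hne]
      exact hE0 i z
  have hEy : E i0 y = x := by
    rw [hEdef, Function.update_self]
    show Equiv.swap (E0 i0 y) x (E0 i0 y) = x
    exact Equiv.swap_apply_left _ _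
  set D1 : ∀ i, Fin (n i) → ℂ := fun _ _ => 1 with hD1
  set D2 : ∀ i, Fin (n i) → ℂ :=
    Function.update (fun i (_ : Fin (n i)) => (1 : ℂ)) i0
      (fun b => if b = y then -1 else 1) with hD2
  have hu1 : mono E D1 ∈ NSet f := by
    apply mono_mem_N f E D1 (by intro i b; simp [hD1]) σ hE
  have hu2 : mono E D2 ∈ NSet f := by
    apply mono_mem_N f E D2 ?_ σ hE
    intro i b
    rcases eq_or_ne i i0 with h | hne
    · have h' := h.symm
      subst h'
      rw [hD2, Function.update_self]
      by_cases hb : b = y <;> simp [hb]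
    · rw [hD2, Function.update_of_ne hne]
      simp
  have key : Pi.single i0 (Matrix.single x y 1)
      = (2⁻¹ : ℂ) • (mono E D1 - mono E D2) := by
    funext i
    rcases eq_or_ne i i0 with h | hne
    · have h' := h.symm
      subst h'
      rw [Pi.single_eq_same]
      ext a b
      have hD2v : D2 i0 b = if b = y then -1 else 1 := by
        rw [hD2, Function.update_self]
      simp only [Pi.smul_apply, Pi.sub_apply, Matrix.smul_apply, Matrix.sub_apply,
        mono, Matrix.of_apply, hD1, hD2v, Matrix.single, Matrix.of_apply]
      by_cases hb : b = y
      · subst hb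
        rw [hEy]
        by_cases ha : a = x
        · subst ha
          simp
          norm_num
        · simp [ha]
          exact fun hh => ha hh.symm
      · by_cases ha : a = E i0 b
        · simp [hb, ha]
          exact fun _ hy => hb hy.symm
        · simp [hb, ha]
          exact fun _ hy => hb hy.symm
    · rw [Pi.single_eq_of_ne hne]
      ext a b
      have hD2v : D2 i b = 1 := by
        rw [hD2, Function.update_of_ne hne]
      simp only [Pi.smul_apply, Pi.sub_apply, Matrix.smul_apply, Matrix.sub_apply,
        mono, Matrix.of_apply, hD1, hD2v, Matrix.zero_apply]
      by_cases ha : a = E i b <;> simp [ha]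
  rw [key]
  exact Submodule.smul_mem _ _ (sub_mem (Submodule.subset_span hu1) (Submodule.subset_span hu2))


lemma span_top_of_singles (f : (i : Fin s) → Fin (n i) → Fin r)
    (h : ∀ i0 : Fin s, ∀ x y : Fin (n i0),
      Pi.single i0 (Matrix.single x y 1) ∈ Submodule.span ℂ (NSet f)) :
    Submodule.span ℂ (NSet f) = ⊤ := by
  classical
  rw [eq_top_iff]
  intro a _
  have ha : a = ∑ i, Pi.single i (a i) := (Finset.univ_sum_single a).symm
  rw [ha]
  refine Submodule.sum_mem _ fun i _ => ?_
  have hai : a i = ∑ x, ∑ y, (a i x y) • Matrix.single x y (1 : ℂ) := by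
    conv_lhs => rw [Matrix.matrix_eq_sum_single (a i)]
    refine Finset.sum_congr rfl fun x _ => Finset.sum_congr rfl fun y _ => ?_
    rw [Matrix.smul_single, smul_eq_mul, mul_one]
  rw [hai]
  have e1 : (Pi.single i (∑ x, ∑ y, (a i x y) • Matrix.single x y (1 : ℂ))
      : ∀ j, Matrix (Fin (n j)) (Fin (n j)) ℂ)
      = ∑ x, ∑ y, (a i x y) • (Pi.single i (Matrix.single x y (1 : ℂ))
        : ∀ j, Matrix (Fin (n j)) (Fin (n j)) ℂ) := by
    have := map_sum (LinearMap.single ℂ (fun j => Matrix (Fin (n j)) (Fin (n j)) ℂ) i)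
      (fun x => ∑ y, (a i x y) • Matrix.single x y (1 : ℂ)) Finset.univ
    rw [show (Pi.single i (∑ x, ∑ y, (a i x y) • Matrix.single x y (1 : ℂ))
        : ∀ j, Matrix (Fin (n j)) (Fin (n j)) ℂ)
        = LinearMap.single ℂ (fun j => Matrix (Fin (n j)) (Fin (n j)) ℂ) i
          (∑ x, ∑ y, (a i x y) • Matrix.single x y (1 : ℂ)) from rfl, this]
    refine Finset.sum_congr rfl fun x _ => ?_
    rw [map_sum]
    refine Finset.sum_congr rfl fun y _ => ?_
    rw [_root_.map_smul]
    rfl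
  rw [e1]
  exact Submodule.sum_mem _ fun x _ => Submodule.sum_mem _ fun y _ =>
    Submodule.smul_mem _ _ (h i x y)


lemma exists_entry_ne_zero (f : (i : Fin s) → Fin (n i) → Fin r)
    (hspan : Submodule.span ℂ (NSet f) = ⊤) (i : Fin s) (x y : Fin (n i)) :
    ∃ u ∈ NSet f, u i x y ≠ 0 := by
  by_contra hcon
  push_neg at hcon
  let φ : (∀ j, Matrix (Fin (n j)) (Fin (n j)) ℂ) →ₗ[ℂ] ℂ :=
    { toFun := fun a => a i x y
      map_add' := fun _ _ => rfl
      map_smul' := fun _ _ => rfl }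
  have hker : NSet f ⊆ (LinearMap.ker φ : Set _) := fun u hu =>
    LinearMap.mem_ker.2 (hcon u hu)
  have hle : Submodule.span ℂ (NSet f) ≤ LinearMap.ker φ := Submodule.span_le.2 hker
  rw [hspan] at hle
  have h1 : φ (fun j => Matrix.of fun _ _ => (1 : ℂ)) = 0 :=
    LinearMap.mem_ker.1 (hle Submodule.mem_top)
  exact one_ne_zero h1

def eproj (f : (i : Fin s) → Fin (n i) → Fin r) (j : Fin r) :
    ∀ i, Matrix (Fin (n i)) (Fin (n i)) ℂ :=
  fun i => Matrix.diagonal fun z => if f i z = j then 1 else 0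

lemma eproj_mem (f : (i : Fin s) → Fin (n i) → Fin r) (j : Fin r) :
    eproj f j ∈ Bset f :=
  ⟨fun m => if m = j then 1 else 0, rfl⟩

lemma eproj_sum (f : (i : Fin s) → Fin (n i) → Fin r) :
    ∑ j, eproj f j = 1 := by
  funext i
  show (∑ j, eproj f j) i = 1
  ext a b
  rw [Finset.sum_apply]
  rw [Matrix.sum_apply]
  by_cases hab : a = b
  · subst hab
    simp [eproj, Matrix.diagonal_apply_eq, Matrix.one_apply_eq]
  · simp [eproj, Matrix.diagonal_apply_ne _ hab, Matrix.one_apply_ne hab]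

lemma eproj_mul (f : (i : Fin s) → Fin (n i) → Fin r) (j j' : Fin r) (h : j ≠ j') :
    eproj f j * eproj f j' = 0 := by
  funext i
  show eproj f j i * eproj f j' i = 0
  rw [eproj, eproj, Matrix.diagonal_mul_diagonal]
  have hz : ∀ z : Fin (n i),
      (if f i z = j then (1 : ℂ) else 0) * (if f i z = j' then 1 else 0) = 0 := by
    intro z
    by_cases hfz : f i z = j
    · rw [if_pos hfz, if_neg (by rw [hfz]; exact h), mul_zero]
    · rw [if_neg hfz, zero_mul]
  rw [show (fun z => (if f i z = j then (1 : ℂ) else 0) * (if f i z = j' then 1 else 0))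
      = fun _ => (0 : ℂ) from funext hz]
  exact Matrix.diagonal_zero

lemma card_le_of_mem_N (f : (i : Fin s) → Fin (n i) → Fin r)
    (hcover : ∀ j : Fin r, ∃ i : Fin s, j ∈ Set.range (f i))
    (u : ∀ i, Matrix (Fin (n i)) (Fin (n i)) ℂ) (hu : u ∈ NSet f)
    (i : Fin s) (x y : Fin (n i)) (hxy : u i x y ≠ 0) (i'' : Fin s) :
    (Finset.univ.filter fun z => f i'' z = f i x).card
      ≤ (Finset.univ.filter fun z => f i'' z = f i y).card := by
  classical
  have hu1 : star u * u = 1 := hu.1.1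
  have hu2 : u * star u = 1 := hu.1.2
  have hmem : ∀ j, u * eproj f j * star u ∈ Bset f := by
    intro j
    rw [show Bset f = (fun a => u * a * star u) '' Bset f from hu.2.symm]
    exact ⟨eproj f j, eproj_mem f j, rfl⟩
  choose c hc using hmem
  -- sum identity
  have hsumA : ∑ j, (u * eproj f j * star u) = 1 := by
    have : ∑ j, (u * eproj f j * star u) = u * (∑ j, eproj f j) * star u := by
      conv_rhs => rw [Finset.mul_sum, Finset.sum_mul]
    rw [this, eproj_sum, mul_one, hu2]
  have hsumc : ∑ j, (fun i' => Matrix.diagonal (c j ∘ f i')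
      : ∀ i', Matrix (Fin (n i')) (Fin (n i')) ℂ) = 1 := by
    rw [← Finset.sum_congr rfl (fun j _ => hc j)]
    exact hsumA
  -- orthogonality
  have horthA : ∀ j j', j ≠ j' →
      (fun i' => Matrix.diagonal ((fun m => c j m * c j' m) ∘ f i')
        : ∀ i', Matrix (Fin (n i')) (Fin (n i')) ℂ) = 0 := by
    intro j j' hjj
    have h0 : (u * eproj f j * star u) * (u * eproj f j' * star u) = 0 := by
      have e1 : (u * eproj f j * star u) * (u * eproj f j' * star u)
          = u * (eproj f j * ((star u * u) * (eproj f j' * star u))) := by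
        simp only [mul_assoc]
      rw [e1, hu1, one_mul, ← mul_assoc (eproj f j), eproj_mul f j j' hjj]
      simp
    rw [hc j, hc j'] at h0
    rw [← h0]
    funext i'
    show (Matrix.diagonal _ : Matrix (Fin (n i')) (Fin (n i')) ℂ) = (Matrix.diagonal _ * Matrix.diagonal _ : Matrix (Fin (n i')) (Fin (n i')) ℂ)
    rw [Matrix.diagonal_mul_diagonal]
    rfl
  -- pointwise values via cover
  have key : ∀ k : Fin r, ∃ t : Fin r, c t k = 1 ∧ ∀ j, j ≠ t → c j k = 0 := by
    intro k
    obtain ⟨ik, xk, hk⟩ := hcover k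
    have heval : ∀ j, ((fun i' => Matrix.diagonal (c j ∘ f i')
        : ∀ i', Matrix (Fin (n i')) (Fin (n i')) ℂ)) ik xk xk = c j k := by
      intro j
      show Matrix.diagonal (c j ∘ f ik) xk xk = c j k
      rw [Matrix.diagonal_apply_eq]
      show c j (f ik xk) = c j k
      rw [hk]
    have hsumk : ∑ j, c j k = 1 := by
      have h1 := congrFun (congrFun (congrFun hsumc ik) xk) xk
      rw [Finset.sum_apply, Matrix.sum_apply] at h1
      rw [← Finset.sum_congr rfl (fun j _ => heval j)]
      rw [h1]
      exact Matrix.one_apply_eq xk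
    have horthk : ∀ j j', j ≠ j' → c j k * c j' k = 0 := by
      intro j j' hjj
      have h1 := congrFun (congrFun (congrFun (horthA j j' hjj) ik) xk) xk
      have h2 : Matrix.diagonal ((fun m => c j m * c j' m) ∘ f ik) xk xk
          = c j k * c j' k := by
        rw [Matrix.diagonal_apply_eq]
        show c j (f ik xk) * c j' (f ik xk) = _
        rw [hk]
      rw [h2] at h1
      simpa using h1
    have hex : ∃ t, c t k ≠ 0 := by
      by_contra hall
      push_neg at hall
      rw [Finset.sum_congr rfl (fun j _ => hall j)] at hsumk
      simp at hsumk
    obtain ⟨t, ht⟩ := hex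
    have hzero : ∀ j, j ≠ t → c j k = 0 := by
      intro j hj
      rcases mul_eq_zero.1 (horthk j t hj) with h | h
      · exact h
      · exact absurd h ht
    refine ⟨t, ?_, hzero⟩
    have : ∑ j, c j k = c t k := by
      rw [Finset.sum_eq_single t (fun j _ hj => hzero j hj) (fun h => absurd (Finset.mem_univ t) h)]
    rw [← this, hsumk]
  choose τ hτ1 hτ0 using key
  have hcval : ∀ j m, c j m = if j = τ m then 1 else 0 := by
    intro j m
    by_cases h : j = τ m
    · rw [if_pos h, h]
      exact hτ1 m
    · rw [if_neg h]
      exact hτ0 m j h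
  -- (**) : τ (f i x) = f i y
  have hstep : τ (f i x) = f i y := by
    have hmul : u * eproj f (f i y)
        = (fun i' => Matrix.diagonal (c (f i y) ∘ f i')
          : ∀ i', Matrix (Fin (n i')) (Fin (n i')) ℂ) * u := by
      calc u * eproj f (f i y) = u * eproj f (f i y) * (star u * u) := by rw [hu1, mul_one]
        _ = (u * eproj f (f i y) * star u) * u := by simp only [mul_assoc]
        _ = _ := by rw [hc (f i y)]
    have h1 := congrFun (congrFun (congrFun hmul i) x) y
    have hL : (u * eproj f (f i y)) i x y = u i x y := by
      have h2 : (u * eproj f (f i y)) i = u i * (eproj f (f i y)) i := rfl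
      rw [h2]
      simp only [eproj]
      rw [Matrix.mul_diagonal, if_pos rfl, mul_one]
    have hR : ((fun i' => Matrix.diagonal (c (f i y) ∘ f i')
        : ∀ i', Matrix (Fin (n i')) (Fin (n i')) ℂ) * u) i x y
        = c (f i y) (f i x) * u i x y := by
      have h2 : ((fun i' => Matrix.diagonal (c (f i y) ∘ f i')
          : ∀ i', Matrix (Fin (n i')) (Fin (n i')) ℂ) * u) i
          = Matrix.diagonal (c (f i y) ∘ f i) * u i := rfl
      rw [h2, Matrix.diagonal_mul]
      rfl
    rw [hL, hR] at h1
    have : c (f i y) (f i x) ≠ 0 := by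
      intro h0
      rw [h0, zero_mul] at h1
      exact hxy h1
    rw [hcval (f i y) (f i x)] at this
    by_cases h : f i y = τ (f i x)
    · exact h.symm
    · rw [if_neg h] at this
      exact absurd rfl this
  -- trace identity
  have hcard : ∀ j : Fin r, (Finset.univ.filter fun z => τ (f i'' z) = j).card
      = (Finset.univ.filter fun z => f i'' z = j).card := by
    intro j
    have h1 := congrFun (hc j) i''
    have htr : Matrix.trace (u i'' * (eproj f j i'') * star (u i''))
        = Matrix.trace (eproj f j i'') := by
      rw [Matrix.trace_mul_cycle]
      have : star (u i'') * u i'' = 1 := congrFun hu1 i''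
      rw [this, one_mul]
    have hlhs : (u * eproj f j * star u) i'' = u i'' * (eproj f j i'') * star (u i'') := rfl
    rw [hlhs] at h1
    rw [h1] at htr
    have hT1 : Matrix.trace (Matrix.diagonal (c j ∘ f i''))
        = ((Finset.univ.filter fun z => τ (f i'' z) = j).card : ℂ) := by
      rw [Matrix.trace_diagonal]
      rw [← Finset.sum_boole]
      refine Finset.sum_congr rfl fun z _ => ?_
      show c j (f i'' z) = _
      rw [hcval]
      by_cases h : τ (f i'' z) = j
      · rw [if_pos h.symm, if_pos h]
      · rw [if_neg (fun hh => h hh.symm), if_neg h]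
    have hT2 : Matrix.trace (eproj f j i'')
        = ((Finset.univ.filter fun z => f i'' z = j).card : ℂ) := by
      show Matrix.trace (Matrix.diagonal fun z => if f i'' z = j then (1:ℂ) else 0) = _
      rw [Matrix.trace_diagonal, Finset.sum_boole]
    rw [hT1, hT2] at htr
    exact_mod_cast htr
  -- conclude
  calc (Finset.univ.filter fun z => f i'' z = f i x).card
      ≤ (Finset.univ.filter fun z => τ (f i'' z) = f i y).card := by
        apply Finset.card_le_card
        intro z hz
        rw [Finset.mem_filter] at hz ⊢
        refine ⟨hz.1, ?_⟩
        rw [hz.2, hstep]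
    _ = (Finset.univ.filter fun z => f i'' z = f i y).card := hcard (f i y)

end Reg9

/-- the commutative inclusion `ℂ^r ⊆ ⊕_i M_{n i}(ℂ)` determined
by the family `f` is regular if and only if its inclusion matrix is a
normalizer matrix: all nonzero entries in each row are equal, and the row
supports are pairwise equal or disjoint. -/
theorem regular_iff_normalizerMatrix (s r : ℕ) (hs : 1 ≤ s) (hr : 1 ≤ r)
    (n : Fin s → ℕ) (hn : ∀ i, 1 ≤ n i)
    (f : (i : Fin s) → Fin (n i) → Fin r)
    (hcover : ∀ j : Fin r, ∃ i : Fin s, j ∈ Set.range (f i))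
    (B : Set (∀ i, Matrix (Fin (n i)) (Fin (n i)) ℂ))
    (hB : B = {a | ∃ c : Fin r → ℂ,
      a = fun i => Matrix.diagonal (c ∘ f i)}) :
    Submodule.span ℂ
      {u : ∀ i, Matrix (Fin (n i)) (Fin (n i)) ℂ |
        u ∈ unitary (∀ i, Matrix (Fin (n i)) (Fin (n i)) ℂ) ∧
        (fun a => u * a * star u) '' B = B} = ⊤ ↔
    ((∀ i : Fin s, ∀ j ∈ Set.range (f i), ∀ k ∈ Set.range (f i),
        (Finset.univ.filter fun x => f i x = j).card =
        (Finset.univ.filter fun x => f i x = k).card) ∧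
     (∀ i i' : Fin s,
        Set.range (f i) = Set.range (f i') ∨
        Set.range (f i) ∩ Set.range (f i') = ∅)) := by
  subst hB
  constructor
  · intro hspan
    have hsp : Submodule.span ℂ (Reg9.NSet f) = ⊤ := hspan
    have main : ∀ (i : Fin s) (x y : Fin (n i)) (i'' : Fin s),
        (Finset.univ.filter fun z => f i'' z = f i x).card
          ≤ (Finset.univ.filter fun z => f i'' z = f i y).card := by
      intro i x y i''
      obtain ⟨u, hu, hne⟩ := Reg9.exists_entry_ne_zero f hsp i x y
      exact Reg9.card_le_of_mem_N f hcover u hu i x y hne i''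
    constructor
    · rintro i j ⟨x, rfl⟩ k ⟨y, rfl⟩
      exact le_antisymm (main i x y i) (main i y x i)
    · intro i i'
      by_cases hint : Set.range (f i) ∩ Set.range (f i') = ∅
      · exact Or.inr hint
      · left
        obtain ⟨j0, hj0i, hj0i'⟩ := Set.nonempty_iff_ne_empty.2 hint
        have sub : ∀ p q : Fin s, j0 ∈ Set.range (f p) → j0 ∈ Set.range (f q) →
            Set.range (f p) ⊆ Set.range (f q) := by
          rintro p q ⟨yp, rfl⟩ hq k ⟨xp, rfl⟩
          have h1 := main p yp xp q
          have h2 := Reg9.card_fib_pos (f q) (f p yp) hq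
          have h3 : 0 < (Finset.univ.filter fun z => f q z = f p xp).card :=
            lt_of_lt_of_le h2 h1
          obtain ⟨z, hz⟩ := Finset.card_pos.1 h3
          rw [Finset.mem_filter] at hz
          exact ⟨z, hz.2⟩
        exact Set.Subset.antisymm (sub i i' hj0i hj0i') (sub i' i hj0i' hj0i)
  · rintro ⟨h1, h2⟩
    exact Reg9.span_top_of_singles f (Reg9.single_mem_span f h1 h2)
end

section
/- Let n, r ≥ 1 and let f : Fin n → Fin r be a surjective function. Let B_f ⊆ Matrix (Fin n) (Fin n) ℂ be the unital subalgebra of all matrices Matrix.diagonal (c ∘ f), c : Fin r → ℂ (realizing the inclusion ℂ^r ⊆ M_n(ℂ) with inclusion matrix entries a_j = |f⁻¹({j})|). Then the inclusion B_f ⊆ M_n(ℂ) is regular if and only if the inclusion matrix satisfies the spectral condition, i.e., there exists d : ℕ such that |f⁻¹({j})| · n = d for every j : Fin r (equivalently, all fibers of f have the same cardinality). -/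
open Matrix

variable {n r : ℕ} {f : Fin n → Fin r}

def Pm (π : Equiv.Perm (Fin n)) : Matrix (Fin n) (Fin n) ℂ :=
  Matrix.of fun i j => if π j = i then 1 else 0

lemma Pm_mul_apply (π : Equiv.Perm (Fin n)) (M : Matrix (Fin n) (Fin n) ℂ) (i j : Fin n) :
    (Pm π * M) i j = M (π.symm i) j := by
  simp only [Matrix.mul_apply, Pm, Matrix.of_apply]
  rw [Finset.sum_eq_single (π.symm i)]
  · simp
  · intro k _ hk
    rw [if_neg, zero_mul]
    intro h; exact hk (by simpa using (congrArg π.symm h))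
  · simp

lemma mul_Pm_apply (π : Equiv.Perm (Fin n)) (M : Matrix (Fin n) (Fin n) ℂ) (i j : Fin n) :
    (M * Pm π) i j = M i (π j) := by
  simp only [Matrix.mul_apply, Pm, Matrix.of_apply]
  rw [Finset.sum_eq_single (π j)]
  · simp
  · intro k _ hk; rw [if_neg (fun h => hk h.symm), mul_zero]
  · simp

lemma Pm_conjTranspose (π : Equiv.Perm (Fin n)) : (Pm π)ᴴ = Pm π.symm := by
  ext i j
  simp only [conjTranspose_apply, Pm, Matrix.of_apply]
  by_cases h : π i = j
  · rw [if_pos h, if_pos (by simpa using (congrArg π.symm h).symm), star_one]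
  · rw [if_neg h, if_neg (fun h2 => h (by simpa using (congrArg π h2).symm)), star_zero]

lemma Pm_mul_diag_mul (π : Equiv.Perm (Fin n)) (d : Fin n → ℂ) :
    Pm π * Matrix.diagonal d * (Pm π)ᴴ = Matrix.diagonal (d ∘ π.symm) := by
  rw [Pm_conjTranspose]
  ext i j
  rw [mul_Pm_apply, Pm_mul_apply]
  by_cases h : i = j
  · subst h; simp [Matrix.diagonal_apply_eq]
  · rw [Matrix.diagonal_apply_ne _ (fun hc => h (by simpa using congrArg π.symm.symm hc)),
      Matrix.diagonal_apply_ne _ h]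

lemma Pm_unitary (π : Equiv.Perm (Fin n)) : Pm π ∈ unitary (Matrix (Fin n) (Fin n) ℂ) := by
  constructor <;>
  · rw [Matrix.star_eq_conjTranspose, Pm_conjTranspose]
    ext i j
    rw [Pm_mul_apply]
    simp [Pm, Matrix.one_apply, Equiv.symm_apply_eq, eq_comm]

lemma normalizer_mul {U V : Matrix (Fin n) (Fin n) ℂ} {B : Set (Matrix (Fin n) (Fin n) ℂ)}
    (hU : U ∈ matrixNormalizer n B) (hV : V ∈ matrixNormalizer n B) :
    U * V ∈ matrixNormalizer n B := by
  refine ⟨mul_mem hU.1 hV.1, ?_⟩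
  have : (fun M => U * V * M * (U * V)ᴴ) = (fun M => U * M * Uᴴ) ∘ (fun M => V * M * Vᴴ) := by
    funext M
    simp only [Function.comp_apply, Matrix.conjTranspose_mul]
    noncomm_ring
  rw [this, Set.image_comp, hV.2, hU.2]

lemma Pm_mem_normalizer (π : Equiv.Perm (Fin n)) (σ : Equiv.Perm (Fin r))
    (hσ : ∀ z, f (π z) = σ (f z)) : Pm π ∈ matrixNormalizer n (Bf n r f) := by
  refine ⟨Pm_unitary π, ?_⟩
  have hsymm : ∀ z, f (π.symm z) = σ.symm (f z) := by
    intro z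
    have h := hσ (π.symm z)
    rw [Equiv.apply_symm_apply] at h
    rw [h, Equiv.symm_apply_apply]
  apply Set.Subset.antisymm
  · rintro _ ⟨M, ⟨c, rfl⟩, rfl⟩
    refine ⟨c ∘ σ.symm, ?_⟩
    show Pm π * Matrix.diagonal (c ∘ f) * (Pm π)ᴴ = _
    rw [Pm_mul_diag_mul]
    refine congrArg Matrix.diagonal ?_
    funext z
    show c (f (π.symm z)) = c (σ.symm (f z))
    rw [hsymm]
  · rintro M ⟨c, rfl⟩
    refine ⟨Matrix.diagonal ((c ∘ σ) ∘ f), ⟨c ∘ σ, rfl⟩, ?_⟩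
    show Pm π * Matrix.diagonal ((c ∘ σ) ∘ f) * (Pm π)ᴴ = _
    rw [Pm_mul_diag_mul]
    refine congrArg Matrix.diagonal ?_
    funext z
    show c (σ (f (π.symm z))) = c (f z)
    rw [hsymm, Equiv.apply_symm_apply]

lemma diag_mem_normalizer (v : Fin n → ℂ) (hv : ∀ z, v z * star (v z) = 1) :
    Matrix.diagonal v ∈ matrixNormalizer n (Bf n r f) := by
  have hct : (Matrix.diagonal v)ᴴ = Matrix.diagonal (star v) := Matrix.diagonal_conjTranspose v
  constructor
  · constructor
    · rw [Matrix.star_eq_conjTranspose, hct, Matrix.diagonal_mul_diagonal]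
      refine (congrArg Matrix.diagonal ?_).trans Matrix.diagonal_one
      funext z
      show star (v z) * v z = 1
      rw [mul_comm]; exact hv z
    · rw [Matrix.star_eq_conjTranspose, hct, Matrix.diagonal_mul_diagonal]
      refine (congrArg Matrix.diagonal ?_).trans Matrix.diagonal_one
      funext z
      exact hv z
  · have hfix : ∀ M ∈ Bf n r f, Matrix.diagonal v * M * (Matrix.diagonal v)ᴴ = M := by
      rintro _ ⟨c, rfl⟩
      rw [hct, Matrix.diagonal_mul_diagonal, Matrix.diagonal_mul_diagonal]
      refine congrArg Matrix.diagonal ?_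
      funext z
      show v z * c (f z) * star (v z) = c (f z)
      rw [mul_comm (v z) (c (f z)), mul_assoc, hv z, mul_one]
    apply Set.Subset.antisymm
    · rintro _ ⟨M, hM, rfl⟩
      show Matrix.diagonal v * M * (Matrix.diagonal v)ᴴ ∈ Bf n r f
      rw [hfix M hM]; exact hM
    · intro M hM
      exact ⟨M, hM, hfix M hM⟩

lemma std_mem (hcard : ∀ j j' : Fin r,
      (Finset.univ.filter fun z => f z = j).card = (Finset.univ.filter fun z => f z = j').card)
    (x y : Fin n) :
    Matrix.single x y (1 : ℂ) ∈ Submodule.span ℂ (matrixNormalizer n (Bf n r f)) := by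
  classical
  set σ : Equiv.Perm (Fin r) := Equiv.swap (f x) (f y) with hσdef
  have hcards : ∀ j : Fin r, Fintype.card {z // f z = j} = Fintype.card {z // f z = σ j} := by
    intro j
    rw [Fintype.card_subtype, Fintype.card_subtype]
    exact hcard j (σ j)
  let e0 : ∀ j, {z // f z = j} ≃ {z // f z = σ j} := fun j => Fintype.equivOfCardEq (hcards j)
  let π0 : Equiv.Perm (Fin n) :=
    (Equiv.sigmaFiberEquiv f).symm.trans ((Equiv.sigmaCongr σ e0).trans (Equiv.sigmaFiberEquiv f))
  have hπ0 : ∀ z, f (π0 z) = σ (f z) := by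
    intro z
    have h1 : π0 z = ((e0 (f z)) ⟨z, rfl⟩).val := rfl
    rw [h1]
    exact ((e0 (f z)) ⟨z, rfl⟩).2
  have hfx : f (π0 y) = f x := by
    rw [hπ0 y, hσdef, Equiv.swap_apply_right]
  set τ : Equiv.Perm (Fin n) := Equiv.swap (π0 y) x with hτdef
  set π : Equiv.Perm (Fin n) := π0.trans τ with hπdef
  have hπy : π y = x := by
    show τ (π0 y) = x
    rw [hτdef]; exact Equiv.swap_apply_left _ _
  have hfτ : ∀ w, f (τ w) = f w := by
    intro w
    rw [hτdef]
    by_cases h1 : w = π0 y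
    · subst h1; rw [Equiv.swap_apply_left, hfx]
    · by_cases h2 : w = x
      · subst h2; rw [Equiv.swap_apply_right, hfx]
      · rw [Equiv.swap_apply_of_ne_of_ne h1 h2]
  have hπσ : ∀ z, f (π z) = σ (f z) := by
    intro z
    show f (τ (π0 z)) = σ (f z)
    rw [hfτ, hπ0]
  have hPm : Pm π ∈ matrixNormalizer n (Bf n r f) := Pm_mem_normalizer π σ hπσ
  set v : Fin n → ℂ := fun z => if z = x then 1 else -1 with hvdef
  have hv : ∀ z, v z * star (v z) = 1 := by
    intro z; by_cases h : z = x <;> simp [hvdef, h]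
  have hD : Matrix.diagonal v ∈ matrixNormalizer n (Bf n r f) := diag_mem_normalizer v hv
  have hDP : Matrix.diagonal v * Pm π ∈ matrixNormalizer n (Bf n r f) := normalizer_mul hD hPm
  have hE : Matrix.single x y (1 : ℂ) =
      (2⁻¹ : ℂ) • Pm π + (2⁻¹ : ℂ) • (Matrix.diagonal v * Pm π) := by
    ext i j
    rw [Matrix.add_apply, Matrix.smul_apply, Matrix.smul_apply, Matrix.diagonal_mul,
      smul_eq_mul, smul_eq_mul]
    show (if x = i ∧ y = j then (1:ℂ) else 0) = 2⁻¹ * Pm π i j + 2⁻¹ * (v i * Pm π i j)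
    by_cases hij : π j = i
    · by_cases hix : i = x
      · have hjy : j = y := π.injective (by rw [hij, hix, hπy])
        rw [if_pos ⟨hix.symm, hjy.symm⟩]
        have hP1 : Pm π i j = 1 := if_pos hij
        rw [hP1, hvdef]
        simp [hix]
        norm_num
      · rw [if_neg (fun hconj => hix hconj.1.symm)]
        have hP1 : Pm π i j = 1 := if_pos hij
        rw [hP1, hvdef]
        simp [hix]
    · have hP0 : Pm π i j = 0 := if_neg hij
      rw [hP0, if_neg, mul_zero, mul_zero, mul_zero, add_zero]
      rintro ⟨hxi, hyj⟩
      exact hij (by rw [← hyj, hπy, hxi])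
  rw [hE]
  exact Submodule.add_mem _
    (Submodule.smul_mem _ _ (Submodule.subset_span hPm))
    (Submodule.smul_mem _ _ (Submodule.subset_span hDP))

lemma idem01 {t : ℂ} (h : t * t = t) : t = 0 ∨ t = 1 := by
  have h2 : t * (t - 1) = 0 := by ring_nf; linear_combination h
  rcases mul_eq_zero.mp h2 with h3 | h3
  · exact Or.inl h3
  · exact Or.inr (sub_eq_zero.mp h3)

lemma entry_vanish (hf : Function.Surjective f) {U : Matrix (Fin n) (Fin n) ℂ}
    (hU : U ∈ matrixNormalizer n (Bf n r f)) (x y : Fin n)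
    (h : (Finset.univ.filter fun z => f z = f x).card ≠
         (Finset.univ.filter fun z => f z = f y).card) :
    U x y = 0 := by
  obtain ⟨hu, himg⟩ := hU
  have h1 : Uᴴ * U = 1 := by
    have := hu.1; rwa [Matrix.star_eq_conjTranspose] at this
  have h2 : U * Uᴴ = 1 := by
    have := hu.2; rwa [Matrix.star_eq_conjTranspose] at this
  set c0 : Fin r → ℂ := fun i => if i = f y then 1 else 0 with hc0def
  set p : Matrix (Fin n) (Fin n) ℂ := Matrix.diagonal (c0 ∘ f) with hpdef
  have hpB : p ∈ Bf n r f := ⟨c0, rfl⟩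
  have hQB : U * p * Uᴴ ∈ Bf n r f := by
    rw [← himg]; exact ⟨p, hpB, rfl⟩
  obtain ⟨c, hc⟩ := hQB
  -- key relation : Q * U = U * p
  have hQU0 : (U * p * Uᴴ) * U = U * p := by
    have e : (U * p * Uᴴ) * U = U * p * (Uᴴ * U) := by noncomm_ring
    rw [e, h1, Matrix.mul_one]
  by_contra hnz
  -- c (f x) = 1
  have hc1 : c (f x) = 1 := by
    have hQU := hQU0
    rw [hc] at hQU
    have he := congrFun (congrFun hQU x) y
    rw [Matrix.diagonal_mul, Matrix.mul_diagonal] at he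
    have hcy : c0 (f y) = 1 := if_pos rfl
    rw [Function.comp_apply, Function.comp_apply, hcy, mul_one] at he
    exact mul_right_cancel₀ hnz (by rw [he, one_mul])
  set c1 : Fin r → ℂ := fun i => if i = f x then 1 else 0 with hc1def
  set p1 : Matrix (Fin n) (Fin n) ℂ := Matrix.diagonal (c1 ∘ f) with hp1def
  -- p1 * Q = p1
  have hp1Q : p1 * (U * p * Uᴴ) = p1 := by
    rw [hc, hp1def, Matrix.diagonal_mul_diagonal]
    refine congrArg Matrix.diagonal ?_
    funext z
    show c1 (f z) * c (f z) = c1 (f z)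
    by_cases hz : f z = f x
    · rw [hz, hc1]; simp [c1]
    · simp [c1, hz]
  -- the preimage of p1
  have hp1B : p1 ∈ Bf n r f := ⟨c1, rfl⟩
  have hp1im : p1 ∈ (fun M => U * M * Uᴴ) '' (Bf n r f) := himg.symm ▸ hp1B
  obtain ⟨b, hbB, hb⟩ := hp1im
  have hbR : b = Uᴴ * p1 * U := by
    rw [← hb]
    have e : Uᴴ * (U * b * Uᴴ) * U = (Uᴴ * U) * b * (Uᴴ * U) := by noncomm_ring
    rw [e, h1, Matrix.one_mul, Matrix.mul_one]
  obtain ⟨c', hc'⟩ := hbB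
  -- b * p = b
  have hbp : b * p = b := by
    rw [hbR]
    have e : Uᴴ * p1 * U * p = Uᴴ * p1 * (U * p) := by noncomm_ring
    rw [e, ← hQU0]
    have e2 : Uᴴ * p1 * (U * p * Uᴴ * U) = Uᴴ * (p1 * (U * p * Uᴴ)) * U := by noncomm_ring
    rw [e2, hp1Q]
  -- b * b = b
  have hbb : b * b = b := by
    rw [hbR]
    have e : (Uᴴ * p1 * U) * (Uᴴ * p1 * U) = Uᴴ * p1 * (U * Uᴴ) * p1 * U := by noncomm_ring
    rw [e, h2, Matrix.mul_one]
    have hp1p1 : p1 * p1 = p1 := by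
      rw [hp1def, Matrix.diagonal_mul_diagonal]
      refine congrArg Matrix.diagonal ?_
      funext z
      show c1 (f z) * c1 (f z) = c1 (f z)
      by_cases hz : f z = f x <;> simp [c1, hz]
    have e2 : Uᴴ * p1 * p1 * U = Uᴴ * (p1 * p1) * U := by noncomm_ring
    rw [e2, hp1p1]
  -- pointwise facts about c'
  have hcp : ∀ i, c' i * c0 i = c' i := by
    have hd := hbp
    rw [hc', hpdef, Matrix.diagonal_mul_diagonal] at hd
    have hfe := Matrix.diagonal_injective hd
    intro i
    obtain ⟨z, hz⟩ := hf i
    have := congrFun hfe z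
    rw [← hz]
    exact this
  have hci : ∀ i, c' i * c' i = c' i := by
    have hd := hbb
    rw [hc', Matrix.diagonal_mul_diagonal] at hd
    have hfe := Matrix.diagonal_injective hd
    intro i
    obtain ⟨z, hz⟩ := hf i
    have := congrFun hfe z
    rw [← hz]
    exact this
  have hczero : ∀ i, i ≠ f y → c' i = 0 := by
    intro i hi
    have h5 := (hcp i).symm
    have hc0i : c0 i = 0 := by rw [hc0def]; simp [hi]
    rw [hc0i, mul_zero] at h5
    exact h5
  have hcy1 : c' (f y) = 1 := by
    rcases idem01 (hci (f y)) with h0 | h1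
    · exfalso
      have hbzero : b = 0 := by
        rw [hc']
        have : c' ∘ f = fun _ => 0 := by
          funext z
          by_cases hz : f z = f y
          · show c' (f z) = 0; rw [hz, h0]
          · exact hczero _ hz
        rw [this]
        simp [Matrix.diagonal_zero]
      have : p1 = 0 := by
        rw [← hb, hbzero]
        show U * 0 * Uᴴ = 0
        rw [Matrix.mul_zero, Matrix.zero_mul]
      have hxx := congrFun (congrFun this x) x
      rw [hp1def, Matrix.diagonal_apply_eq] at hxx
      simp [c1] at hxx
    · exact h1
  have hcc0 : c' = c0 := by
    funext i
    by_cases hi : i = f y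
    · rw [hi, hcy1, hc0def]; simp
    · rw [hczero i hi, hc0def]; simp [hi]
  have hbp' : b = p := by rw [hc', hcc0, hpdef]
  have hp1Q2 : p1 = U * p * Uᴴ := by rw [← hb, hbp']
  -- trace comparison
  have htr : Matrix.trace p1 = Matrix.trace p := by
    rw [hp1Q2, Matrix.trace_mul_cycle, h1, Matrix.one_mul]
  have htr1 : Matrix.trace p1 =
      ((Finset.univ.filter fun z => f z = f x).card : ℂ) := by
    rw [hp1def, Matrix.trace_diagonal]
    rw [← Finset.sum_boole]
    rfl
  have htr2 : Matrix.trace p =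
      ((Finset.univ.filter fun z => f z = f y).card : ℂ) := by
    rw [hpdef, Matrix.trace_diagonal]
    rw [← Finset.sum_boole]
    rfl
  rw [htr1, htr2] at htr
  exact h (Nat.cast_inj.mp htr)

/-- the inclusion `ℂ^r ⊆ M_n(ℂ)` is regular if and only if its
inclusion matrix satisfies the spectral condition `a_j · n = d` for all `j`. -/
theorem regular_iff_spectral_condition (n r : ℕ) (hn : 1 ≤ n) (hr : 1 ≤ r)
    (f : Fin n → Fin r) (hf : Function.Surjective f) :
    Submodule.span ℂ (matrixNormalizer n (Bf n r f)) = ⊤ ↔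
    ∃ d : ℕ, ∀ j : Fin r,
      (Finset.univ.filter fun x => f x = j).card * n = d := by
  constructor
  · intro hspan
    have key : ∀ j j' : Fin r,
        (Finset.univ.filter fun z => f z = j).card =
        (Finset.univ.filter fun z => f z = j').card := by
      by_contra hne
      push_neg at hne
      obtain ⟨j, j', hjj⟩ := hne
      obtain ⟨x, hx⟩ := hf j
      obtain ⟨y, hy⟩ := hf j'
      let φ : Matrix (Fin n) (Fin n) ℂ →ₗ[ℂ] ℂ :=
        { toFun := fun M => M x y, map_add' := fun _ _ => rfl, map_smul' := fun _ _ => rfl }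
      have hsub : matrixNormalizer n (Bf n r f) ⊆ (LinearMap.ker φ : Submodule ℂ _) := by
        intro U hU
        rw [SetLike.mem_coe, LinearMap.mem_ker]
        show U x y = 0
        exact entry_vanish hf hU x y (by rw [hx, hy]; exact hjj)
      have hle := Submodule.span_le.mpr hsub
      rw [hspan] at hle
      have h1 : (Matrix.of fun _ _ => (1 : ℂ)) ∈ LinearMap.ker φ := hle Submodule.mem_top
      rw [LinearMap.mem_ker] at h1
      exact one_ne_zero h1
    exact ⟨(Finset.univ.filter fun z => f z = ⟨0, hr⟩).card * n,
      fun j => by rw [key j ⟨0, hr⟩]⟩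
  · rintro ⟨d, hd⟩
    have hcard : ∀ j j' : Fin r,
        (Finset.univ.filter fun z => f z = j).card =
        (Finset.univ.filter fun z => f z = j').card := by
      intro j j'
      exact Nat.eq_of_mul_eq_mul_right hn (by rw [hd j, hd j'])
    rw [eq_top_iff]
    intro M _
    rw [Matrix.matrix_eq_sum_single M]
    refine Submodule.sum_mem _ fun x _ => Submodule.sum_mem _ fun y _ => ?_
    have hs : Matrix.single x y (M x y) = M x y • Matrix.single x y (1 : ℂ) := by
      rw [Matrix.smul_single, smul_eq_mul, mul_one]
    rw [hs]
    exact Submodule.smul_mem _ _ (std_mem hcard x y)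
end

section
/- Let A : Fin s → Fin r → ℕ be a normalizer matrix. Then A has depth two: there exists q : ℕ such that for all i : Fin s and j : Fin r, (A * Aᵀ * A) i j ≤ q * (A i j), where the products are ordinary matrix products over ℕ. Moreover q may be chosen to be the maximum over rows i of |Y i| · Σ_{k : Y k = Y i} (c k)², where Y i is the support of row i and c k is the common nonzero value of the entries in row k. -/
open Matrix
/-- a normalizer matrix has depth two, `A Aᵀ A ≤ q A` entrywise,
and `q` may be chosen to be the maximum over rows `i` of
`|Y i| · Σ_{k : Y k = Y i} (c k)²`, where `Y i` is the support of row `i` and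
`c k` is the common nonzero value of the entries of row `k`. -/
theorem normalizerMatrix_depth_two {s r : ℕ} (A : Matrix (Fin s) (Fin r) ℕ)
    (c : Fin s → ℕ)
    (hirr : (∀ i, ∃ j, A i j ≠ 0) ∧ (∀ j, ∃ i, A i j ≠ 0))
    (hc : ∀ i j, A i j ≠ 0 → A i j = c i)
    (hsupp : ∀ i k : Fin s,
      {j : Fin r | A i j ≠ 0} = {j : Fin r | A k j ≠ 0} ∨
      {j : Fin r | A i j ≠ 0} ∩ {j : Fin r | A k j ≠ 0} = ∅) :
    ∃ q : ℕ,
      (∀ (i : Fin s) (j : Fin r), (A * Aᵀ * A) i j ≤ q * A i j) ∧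
      q = Finset.univ.sup (fun i : Fin s =>
        (Finset.univ.filter fun j => A i j ≠ 0).card *
        ∑ k ∈ @Finset.filter _
            (fun k : Fin s => ∀ j, (A k j ≠ 0 ↔ A i j ≠ 0))
            (fun _ => Fintype.decidableForallFintype) Finset.univ,
          (c k) ^ 2) := by
  classical
  refine ⟨_, ?_, rfl⟩
  intro i j
  have hmul : (A * Aᵀ * A) i j = ∑ k, (∑ m, A i m * A k m) * A k j := by
    simp [Matrix.mul_apply, Matrix.transpose_apply]
  by_cases hij : A i j = 0
  · rw [hmul, hij, Nat.mul_zero, Nat.le_zero]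
    refine Finset.sum_eq_zero fun k _ => ?_
    by_cases hkj : A k j = 0
    · simp [hkj]
    · rcases hsupp i k with heq | hdis
      · exact absurd ((Set.ext_iff.mp heq j).mpr hkj) (not_not.2 hij)
      · have hz : ∑ m, A i m * A k m = 0 := Finset.sum_eq_zero fun m _ => by
          by_contra h
          have h1 : A i m ≠ 0 := fun h' => h (by simp [h'])
          have h2 : A k m ≠ 0 := fun h' => h (by simp [h'])
          have hmem : m ∈ ({j | A i j ≠ 0} ∩ {j | A k j ≠ 0} : Set (Fin r)) := ⟨h1, h2⟩
          rw [hdis] at hmem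
          exact hmem
        rw [hz, Nat.zero_mul]
  · set Y : Finset (Fin r) := Finset.univ.filter (fun j => A i j ≠ 0) with hY
    have key : ∀ k : Fin s, (∑ m, A i m * A k m) * A k j =
        if (∀ j, (A k j ≠ 0 ↔ A i j ≠ 0)) then c i * (Y.card * c k ^ 2) else 0 := by
      intro k
      by_cases h : ∀ j, (A k j ≠ 0 ↔ A i j ≠ 0)
      · rw [if_pos h]
        have hkj : A k j ≠ 0 := (h j).mpr hij
        have hinner : ∑ m, A i m * A k m = ∑ m, if A i m ≠ 0 then c i * c k else 0 := by
          refine Finset.sum_congr rfl fun m _ => ?_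
          by_cases hm : A i m = 0
          · simp [hm]
          · have hkm : A k m ≠ 0 := (h m).mpr hm
            rw [if_pos hm, hc i m hm, hc k m hkm]
        rw [hinner, ← Finset.sum_filter, Finset.sum_const, smul_eq_mul, hc k j hkj, ← hY]
        ring
      · rw [if_neg h]
        rcases hsupp i k with heq | hdis
        · exact absurd (fun j => ⟨fun hk => (Set.ext_iff.mp heq j).mpr hk,
            fun hi => (Set.ext_iff.mp heq j).mp hi⟩) h
        · have hz : ∑ m, A i m * A k m = 0 := Finset.sum_eq_zero fun m _ => by
            by_contra hcon
            have h1 : A i m ≠ 0 := fun h' => hcon (by simp [h'])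
            have h2 : A k m ≠ 0 := fun h' => hcon (by simp [h'])
            have hmem : m ∈ ({j | A i j ≠ 0} ∩ {j | A k j ≠ 0} : Set (Fin r)) := ⟨h1, h2⟩
            rw [hdis] at hmem
            exact hmem
          rw [hz, Nat.zero_mul]
    rw [hmul]
    calc ∑ k, (∑ m, A i m * A k m) * A k j
        = ∑ k ∈ Finset.univ.filter (fun k : Fin s => ∀ j, (A k j ≠ 0 ↔ A i j ≠ 0)),
            c i * (Y.card * c k ^ 2) := by
          rw [Finset.sum_filter]
          exact Finset.sum_congr rfl fun k _ => by convert key k using 2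
      _ = c i * (Y.card * ∑ k ∈ Finset.univ.filter
            (fun k : Fin s => ∀ j, (A k j ≠ 0 ↔ A i j ≠ 0)), c k ^ 2) := by
          rw [Finset.mul_sum, Finset.mul_sum]
      _ ≤ _ := by
          rw [hc i j hij, mul_comm _ (c i), hY]
          convert Nat.mul_le_mul_left _ (Finset.le_sup (f := fun i : Fin s =>
            (Finset.univ.filter fun j => A i j ≠ 0).card *
            ∑ k ∈ @Finset.filter _
                (fun k : Fin s => ∀ j, (A k j ≠ 0 ↔ A i j ≠ 0))
                (fun _ => Fintype.decidableForallFintype) Finset.univ, (c k) ^ 2)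
            (Finset.mem_univ i))
end

section
/- Let m, r, t ≥ 1 and consider the full matrix algebra M := Matrix (Fin r × Fin m × Fin t) (Fin r × Fin m × Fin t) ℂ (a copy of M_{mrt}(ℂ)). Let B ⊆ M be the set of all matrices Z for which there exists X : Fin r → Matrix (Fin m) (Fin m) ℂ such that Z (j,a,u) (k,b,v) = (if j = k ∧ u = v then X j a b else 0); i.e., B is a copy of the homogeneous algebra ⊕_{j<r} M_m(ℂ) embedded in M_{mrt}(ℂ) with all multiplicities equal to t. Then B is a unital star-subalgebra of M and the inclusion B ⊆ M is regular: the ℂ-linear span of {U ∈ M : U unitary, U B Uᴴ = B} equals M. -/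
open Matrix Kronecker

namespace Regular13

variable {m r t : ℕ}

abbrev Idx (m r t : ℕ) := Fin r × Fin m × Fin t
abbrev Mat (m r t : ℕ) := Matrix (Idx m r t) (Idx m r t) ℂ

def Bset (m r t : ℕ) : Set (Mat m r t) :=
  {Z | ∃ X : Fin r → Matrix (Fin m) (Fin m) ℂ,
      ∀ (j : Fin r) (a : Fin m) (u : Fin t) (k : Fin r) (b : Fin m) (v : Fin t),
        Z (j, a, u) (k, b, v) = if j = k ∧ u = v then X j a b else 0}

noncomputable def Phi (m t : ℕ) {r : ℕ} (X : Fin r → Matrix (Fin m) (Fin m) ℂ) : Mat m r t :=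
  reindexAlgEquiv ℂ ℂ (Equiv.prodComm (Fin m × Fin t) (Fin r))
    (blockDiagonal fun j => X j ⊗ₖ (1 : Matrix (Fin t) (Fin t) ℂ))

lemma Phi_apply (X : Fin r → Matrix (Fin m) (Fin m) ℂ) (j : Fin r) (a : Fin m) (u : Fin t)
    (k : Fin r) (b : Fin m) (v : Fin t) :
    Phi m t X (j, a, u) (k, b, v) = if j = k ∧ u = v then X j a b else 0 := by
  simp only [Phi, reindexAlgEquiv_apply, reindex_apply, submatrix_apply,
    Equiv.prodComm_symm, Equiv.prodComm_apply, Prod.swap_prod_mk,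
    blockDiagonal_apply, kroneckerMap_apply, one_apply]
  by_cases h1 : j = k <;> by_cases h2 : u = v <;> simp [h1, h2]

lemma mem_Bset_iff {Z : Mat m r t} :
    Z ∈ Bset m r t ↔ ∃ X, Z = Phi m t X := by
  constructor
  · rintro ⟨X, hX⟩
    exact ⟨X, by ext ⟨j, a, u⟩ ⟨k, b, v⟩; rw [hX, Phi_apply]⟩
  · rintro ⟨X, rfl⟩
    exact ⟨X, fun j a u k b v => Phi_apply ..⟩

lemma Phi_one : Phi m t (fun _ : Fin r => (1 : Matrix (Fin m) (Fin m) ℂ)) = 1 := by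
  unfold Phi
  rw [show (fun j : Fin r => (1 : Matrix (Fin m) (Fin m) ℂ) ⊗ₖ (1 : Matrix (Fin t) (Fin t) ℂ))
      = (1 : Fin r → Matrix (Fin m × Fin t) (Fin m × Fin t) ℂ)
      from funext fun _ => one_kronecker_one, blockDiagonal_one, _root_.map_one]

lemma Phi_mul (X Y : Fin r → Matrix (Fin m) (Fin m) ℂ) :
    Phi m t X * Phi m t Y = Phi m t (fun j => X j * Y j) := by
  unfold Phi
  rw [← _root_.map_mul, ← blockDiagonal_mul]
  apply congrArg
  apply congrArg
  funext j
  rw [← mul_kronecker_mul, one_mul]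

lemma Phi_add (X Y : Fin r → Matrix (Fin m) (Fin m) ℂ) :
    Phi m t X + Phi m t Y = Phi m t (fun j => X j + Y j) := by
  unfold Phi
  rw [← map_add, ← blockDiagonal_add]
  apply congrArg
  apply congrArg
  funext j
  simp [add_kronecker]

lemma Phi_smul (c : ℂ) (X : Fin r → Matrix (Fin m) (Fin m) ℂ) :
    c • Phi m t X = Phi m t (fun j => c • X j) := by
  unfold Phi
  rw [← _root_.map_smul, ← blockDiagonal_smul]
  apply congrArg
  apply congrArg
  funext j
  simp [smul_kronecker]


/-! ### Permutation matrices -/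

def Pm (f : Idx m r t ≃ Idx m r t) : Mat m r t :=
  of fun p q => if f q = p then 1 else 0

lemma Pm_apply (f : Idx m r t ≃ Idx m r t) (p q : Idx m r t) :
    Pm f p q = if f q = p then 1 else 0 := rfl

lemma Pm_mul_apply (f : Idx m r t ≃ Idx m r t) (Z : Mat m r t) (p q : Idx m r t) :
    (Pm f * Z) p q = Z (f.symm p) q := by
  rw [mul_apply]
  rw [Finset.sum_eq_single (f.symm p)]
  · simp [Pm_apply]
  · intro x _ hx
    have : f x ≠ p := fun h => hx (by rw [← h]; simp)
    simp [Pm_apply, this]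
  · simp

lemma mul_Pm_apply (f : Idx m r t ≃ Idx m r t) (Z : Mat m r t) (p q : Idx m r t) :
    (Z * Pm f) p q = Z p (f q) := by
  rw [mul_apply]
  simp only [Pm_apply, mul_ite, mul_one, mul_zero]
  rw [Finset.sum_ite_eq Finset.univ (f q) (fun x => Z p x)]
  simp

lemma Pm_conjTranspose (f : Idx m r t ≃ Idx m r t) : (Pm f)ᴴ = Pm f.symm := by
  ext p q
  rw [conjTranspose_apply, Pm_apply, Pm_apply]
  by_cases h : f p = q
  · have h2 : f.symm q = p := by rw [← h]; simp
    simp [h, h2]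
  · have h2 : f.symm q ≠ p := fun h3 => h (by rw [← h3]; simp)
    simp [h, h2]

lemma Pm_mul_Pm (f g : Idx m r t ≃ Idx m r t) : Pm f * Pm g = Pm (g.trans f) := by
  ext p q
  rw [Pm_mul_apply, Pm_apply, Pm_apply, Equiv.trans_apply]
  by_cases h : f (g q) = p
  · have : g q = f.symm p := by rw [← h]; simp
    simp [h, this]
  · have : g q ≠ f.symm p := fun h2 => h (by rw [h2]; simp)
    simp [h, this]

lemma Pm_refl : Pm (Equiv.refl (Idx m r t)) = 1 := by
  ext p q
  rw [Pm_apply, one_apply]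
  simp [eq_comm]

lemma Pm_unitary (f : Idx m r t ≃ Idx m r t) : Pm f ∈ unitary (Mat m r t) := by
  rw [Unitary.mem_iff, star_eq_conjTranspose, Pm_conjTranspose]
  constructor
  · rw [Pm_mul_Pm, Equiv.self_trans_symm, Pm_refl]
  · rw [Pm_mul_Pm, Equiv.symm_trans_self, Pm_refl]

lemma Pm_conj_apply (f : Idx m r t ≃ Idx m r t) (Z : Mat m r t) (p q : Idx m r t) :
    (Pm f * Z * (Pm f)ᴴ) p q = Z (f.symm p) (f.symm q) := by
  rw [Pm_conjTranspose, mul_Pm_apply, Pm_mul_apply]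

/-! ### The normalizer set -/

def Sset (m r t : ℕ) : Set (Mat m r t) :=
  {U | U ∈ unitary (Mat m r t) ∧ (fun Z => U * Z * Uᴴ) '' Bset m r t = Bset m r t}

lemma image_eq_of_conj {U : Mat m r t} (hU : U ∈ unitary (Mat m r t))
    (h1 : ∀ Z ∈ Bset m r t, U * Z * Uᴴ ∈ Bset m r t)
    (h2 : ∀ Z ∈ Bset m r t, Uᴴ * Z * U ∈ Bset m r t) :
    (fun Z => U * Z * Uᴴ) '' Bset m r t = Bset m r t := by
  apply Set.Subset.antisymm
  · rintro _ ⟨Z, hZ, rfl⟩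
    exact h1 Z hZ
  · intro Z hZ
    refine ⟨Uᴴ * Z * U, h2 Z hZ, ?_⟩
    have hu : U * Uᴴ = 1 := by
      rw [← star_eq_conjTranspose]
      exact (Unitary.mem_iff.mp hU).2
    show U * (Uᴴ * Z * U) * Uᴴ = Z
    calc U * (Uᴴ * Z * U) * Uᴴ = (U * Uᴴ) * Z * (U * Uᴴ) := by
          simp only [Matrix.mul_assoc]
      _ = Z := by rw [hu, Matrix.one_mul, Matrix.mul_one]

lemma one_mem_Sset : (1 : Mat m r t) ∈ Sset m r t := by
  refine ⟨one_mem _, ?_⟩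
  have : (fun Z : Mat m r t => 1 * Z * (1 : Mat m r t)ᴴ) = id := by
    funext Z
    simp
  rw [this, Set.image_id]

lemma mul_mem_Sset {U V : Mat m r t} (hU : U ∈ Sset m r t) (hV : V ∈ Sset m r t) :
    U * V ∈ Sset m r t := by
  refine ⟨mul_mem hU.1 hV.1, ?_⟩
  have : (fun Z : Mat m r t => (U * V) * Z * (U * V)ᴴ)
      = (fun Z => U * Z * Uᴴ) ∘ (fun Z => V * Z * Vᴴ) := by
    funext Z
    simp [conjTranspose_mul, Matrix.mul_assoc]
  rw [this, Set.image_comp, hV.2, hU.2]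

/-! ### Diagonal sign unitaries normalize -/

lemma diag_mem_Sset (d : Idx m r t → ℂ) (hd : ∀ p, d p = 1 ∨ d p = -1)
    (c : Fin r → Fin m → Fin m → ℂ)
    (hc : ∀ (j : Fin r) (a b : Fin m) (u : Fin t), d (j, a, u) * d (j, b, u) = c j a b) :
    diagonal d ∈ Sset m r t := by
  have hstar : ∀ p, star (d p) = d p := by
    intro p
    rcases hd p with h | h <;> simp [h]
  have hDH : (diagonal d)ᴴ = diagonal d := by
    rw [diagonal_conjTranspose]
    apply congrArg
    funext p
    exact hstar p
  have hsq : ∀ p, d p * d p = 1 := by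
    intro p
    rcases hd p with h | h <;> rw [h] <;> norm_num
  have hu : diagonal d ∈ unitary (Mat m r t) := by
    rw [Unitary.mem_iff, star_eq_conjTranspose, hDH, diagonal_mul_diagonal]
    have h1 : (fun p => d p * d p) = fun _ : Idx m r t => (1 : ℂ) := funext hsq
    constructor <;> rw [h1] <;> exact diagonal_one
  have key : ∀ Z ∈ Bset m r t, diagonal d * Z * diagonal d ∈ Bset m r t := by
    rintro Z ⟨X, hX⟩
    refine ⟨fun j => of fun a b => c j a b * X j a b, ?_⟩
    intro j a u k b v
    rw [mul_diagonal, diagonal_mul, hX]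
    split_ifs with h
    · obtain ⟨rfl, rfl⟩ := h
      show d (j, a, u) * X j a b * d (j, b, u) = c j a b * X j a b
      calc d (j, a, u) * X j a b * d (j, b, u)
          = d (j, a, u) * d (j, b, u) * X j a b := by ring
        _ = c j a b * X j a b := by rw [hc]
    · ring
  refine ⟨hu, image_eq_of_conj hu ?_ ?_⟩
  · intro Z hZ
    rw [hDH]
    exact key Z hZ
  · intro Z hZ
    rw [hDH]
    exact key Z hZ

/-! ### Product permutation unitaries normalize -/

lemma perm_conj_mem (σ : Equiv.Perm (Fin r)) (π : Equiv.Perm (Fin m)) (τ : Equiv.Perm (Fin t)) :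
    ∀ Z ∈ Bset m r t,
      Pm (σ.prodCongr (π.prodCongr τ)) * Z * (Pm (σ.prodCongr (π.prodCongr τ)))ᴴ
        ∈ Bset m r t := by
  rintro Z ⟨X, hX⟩
  refine ⟨fun j => of fun a b => X (σ.symm j) (π.symm a) (π.symm b), ?_⟩
  intro j a u k b v
  rw [Pm_conj_apply]
  have hsymm : ∀ (j : Fin r) (a : Fin m) (u : Fin t),
      (σ.prodCongr (π.prodCongr τ)).symm (j, a, u) = (σ.symm j, π.symm a, τ.symm u) := by
    intro j a u
    simp [Equiv.prodCongr]
  rw [hsymm, hsymm, hX]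
  by_cases h : j = k ∧ u = v
  · obtain ⟨rfl, rfl⟩ := h
    simp
  · have h2 : ¬(σ.symm j = σ.symm k ∧ τ.symm u = τ.symm v) := by
      intro ⟨h3, h4⟩
      exact h ⟨σ.symm.injective h3, τ.symm.injective h4⟩
    simp [h, h2]

lemma perm_mem_Sset (σ : Equiv.Perm (Fin r)) (π : Equiv.Perm (Fin m)) (τ : Equiv.Perm (Fin t)) :
    Pm (σ.prodCongr (π.prodCongr τ)) ∈ Sset m r t := by
  refine ⟨Pm_unitary _, image_eq_of_conj (Pm_unitary _) (perm_conj_mem σ π τ) ?_⟩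
  intro Z hZ
  have hs : (σ.prodCongr (π.prodCongr τ)).symm = σ.symm.prodCongr (π.symm.prodCongr τ.symm) :=
    Equiv.ext fun p => by obtain ⟨j, a, u⟩ := p; simp [Equiv.prodCongr]
  have h1 : (Pm (σ.prodCongr (π.prodCongr τ)))ᴴ = Pm (σ.symm.prodCongr (π.symm.prodCongr τ.symm)) := by
    rw [Pm_conjTranspose, hs]
  have h2 : Pm (σ.prodCongr (π.prodCongr τ))
      = (Pm (σ.symm.prodCongr (π.symm.prodCongr τ.symm)))ᴴ := by
    rw [Pm_conjTranspose, ← hs]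
    apply congrArg
    exact (Equiv.symm_symm _).symm
  rw [h1, h2]
  exact perm_conj_mem σ.symm π.symm τ.symm Z hZ


/-! ### Building matrix units -/

def deltaM (p : Idx m r t) : Mat m r t := diagonal fun x => if x = p then 1 else 0

lemma E_eq (f : Idx m r t ≃ Idx m r t) (p q : Idx m r t) (h : f q = p) :
    Matrix.single p q (1 : ℂ) = deltaM p * Pm f * deltaM q := by
  ext x y
  rw [deltaM, deltaM, mul_diagonal, diagonal_mul, Pm_apply]
  by_cases hx : x = p <;> by_cases hy : y = q
  · subst hx; subst hy
    simp [Matrix.single, h]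
  · have hy' : ¬q = y := fun hh => hy hh.symm
    simp [Matrix.single, hy, hy']
  · have hx' : ¬p = x := fun hh => hx hh.symm
    simp [Matrix.single, hx, hx']
  · have hx' : ¬p = x := fun hh => hx hh.symm
    simp [Matrix.single, hx, hx']

lemma one_sub_diagonal (d : Idx m r t → ℂ) :
    (1 : Mat m r t) - diagonal d = diagonal fun x => 1 - d x := by
  rw [← diagonal_one, ← diagonal_sub]

lemma deltaM_eq (j : Fin r) (a : Fin m) (u : Fin t) :
    deltaM ((j, a, u) : Idx m r t)
      = (4⁻¹ : ℂ) • (((1 : Mat m r t)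
          - diagonal (fun x : Idx m r t => if (x.1, x.2.1) = (j, a) then (-1 : ℂ) else 1)) *
          ((1 : Mat m r t)
          - diagonal (fun x : Idx m r t => if x.2.2 = u then (-1 : ℂ) else 1))) := by
  rw [one_sub_diagonal, one_sub_diagonal, diagonal_mul_diagonal, ← diagonal_smul, deltaM]
  apply congrArg
  funext x
  obtain ⟨j', a', u'⟩ := x
  simp only [Pi.smul_apply, smul_eq_mul, Prod.mk.injEq]
  by_cases h1 : j' = j <;> by_cases h2 : a' = a <;> by_cases h3 : u' = u <;>
    first
    | norm_num [h1, h2, h3]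
    | simp [h1, h2, h3]

end Regular13

open Regular13 in
/-- the homogeneous algebra `⊕_{j<r} M_m(ℂ)` embedded into
`M_{mrt}(ℂ)` with all multiplicities equal to `t` is a unital star-subalgebra,
and the inclusion is regular. -/
theorem homogeneous_equal_multiplicities_regular (m r t : ℕ)
    (hm : 1 ≤ m) (hr : 1 ≤ r) (ht : 1 ≤ t)
    (B : Set (Matrix (Fin r × Fin m × Fin t) (Fin r × Fin m × Fin t) ℂ))
    (hB : B = {Z | ∃ X : Fin r → Matrix (Fin m) (Fin m) ℂ,
      ∀ (j : Fin r) (a : Fin m) (u : Fin t) (k : Fin r) (b : Fin m) (v : Fin t),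
        Z (j, a, u) (k, b, v) = if j = k ∧ u = v then X j a b else 0}) :
    (1 : Matrix (Fin r × Fin m × Fin t) (Fin r × Fin m × Fin t) ℂ) ∈ B ∧
    (∀ x ∈ B, ∀ y ∈ B, x + y ∈ B) ∧
    (∀ x ∈ B, ∀ y ∈ B, x * y ∈ B) ∧
    (∀ (c : ℂ), ∀ x ∈ B, c • x ∈ B) ∧
    (∀ x ∈ B, xᴴ ∈ B) ∧
    Submodule.span ℂ
      {U : Matrix (Fin r × Fin m × Fin t) (Fin r × Fin m × Fin t) ℂ |
        U ∈ unitary (Matrix (Fin r × Fin m × Fin t) (Fin r × Fin m × Fin t) ℂ) ∧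
        (fun Z => U * Z * Uᴴ) '' B = B} = ⊤ := by
  subst hB
  refine ⟨?_, ?_, ?_, ?_, ?_, ?_⟩
  · exact mem_Bset_iff.mpr ⟨fun _ => 1, Phi_one.symm⟩
  · intro x hx y hy
    obtain ⟨X, rfl⟩ := mem_Bset_iff.mp hx
    obtain ⟨Y, rfl⟩ := mem_Bset_iff.mp hy
    exact mem_Bset_iff.mpr ⟨fun j => X j + Y j, Phi_add X Y⟩
  · intro x hx y hy
    obtain ⟨X, rfl⟩ := mem_Bset_iff.mp hx
    obtain ⟨Y, rfl⟩ := mem_Bset_iff.mp hy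
    exact mem_Bset_iff.mpr ⟨fun j => X j * Y j, Phi_mul X Y⟩
  · intro c x hx
    obtain ⟨X, rfl⟩ := mem_Bset_iff.mp hx
    exact mem_Bset_iff.mpr ⟨fun j => c • X j, Phi_smul c X⟩
  · rintro x ⟨X, hX⟩
    refine ⟨fun j => (X j)ᴴ, ?_⟩
    intro j a u k b v
    rw [conjTranspose_apply, hX k b v j a u]
    by_cases h : j = k ∧ u = v
    · obtain ⟨rfl, rfl⟩ := h
      simp [conjTranspose_apply]
    · have h2 : ¬(k = j ∧ v = u) := fun ⟨h3, h4⟩ => h ⟨h3.symm, h4.symm⟩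
      simp [h, h2]
  · show Submodule.span ℂ (Sset m r t) = ⊤
    have hmulN : ∀ x y : Mat m r t, x ∈ Submodule.span ℂ (Sset m r t) →
        y ∈ Submodule.span ℂ (Sset m r t) → x * y ∈ Submodule.span ℂ (Sset m r t) := by
      intro x y hx hy
      have h := Submodule.mul_mem_mul hx hy
      rw [Submodule.span_mul_span] at h
      refine Submodule.span_le.mpr ?_ h
      rintro z ⟨u, hu, v, hv, rfl⟩
      exact Submodule.subset_span (mul_mem_Sset hu hv)
    have hDmem1 : ∀ (j : Fin r) (a : Fin m),
        diagonal (fun x : Idx m r t => if (x.1, x.2.1) = (j, a) then (-1 : ℂ) else 1)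
          ∈ Sset m r t := by
      intro j a
      refine diag_mem_Sset _ (fun p => by split_ifs <;> simp)
        (fun j' a' b' => (if (j', a') = (j, a) then (-1 : ℂ) else 1) *
          (if (j', b') = (j, a) then (-1 : ℂ) else 1)) ?_
      intro j' a' b' u'
      rfl
    have hDmem2 : ∀ (u : Fin t),
        diagonal (fun x : Idx m r t => if x.2.2 = u then (-1 : ℂ) else 1) ∈ Sset m r t := by
      intro u
      refine diag_mem_Sset _ (fun p => by split_ifs <;> simp)
        (fun _ _ _ => 1) ?_
      intro j' a' b' u'
      show (if u' = u then (-1 : ℂ) else 1) * (if u' = u then (-1 : ℂ) else 1) = 1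
      split_ifs <;> norm_num
    have hδN : ∀ p : Idx m r t, deltaM p ∈ Submodule.span ℂ (Sset m r t) := by
      rintro ⟨j, a, u⟩
      rw [deltaM_eq]
      refine Submodule.smul_mem _ _ (hmulN _ _ ?_ ?_)
      · exact sub_mem (Submodule.subset_span one_mem_Sset)
          (Submodule.subset_span (hDmem1 j a))
      · exact sub_mem (Submodule.subset_span one_mem_Sset)
          (Submodule.subset_span (hDmem2 u))
    have hEN : ∀ p q : Idx m r t,
        Matrix.single p q (1 : ℂ) ∈ Submodule.span ℂ (Sset m r t) := by
      rintro ⟨j, a, u⟩ ⟨k, b, v⟩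
      rw [E_eq ((Equiv.swap j k).prodCongr ((Equiv.swap a b).prodCongr (Equiv.swap u v)))
        _ _ (by simp [Equiv.prodCongr, Equiv.swap_apply_right])]
      exact hmulN _ _ (hmulN _ _ (hδN _) (Submodule.subset_span (perm_mem_Sset _ _ _))) (hδN _)
    rw [Submodule.eq_top_iff']
    intro M
    nth_rewrite 1 [matrix_eq_sum_single M]
    apply Submodule.sum_mem
    intro i _
    apply Submodule.sum_mem
    intro l _
    have h : Matrix.single i l (M i l) = (M i l) • Matrix.single i l (1 : ℂ) := by
      rw [smul_single, smul_eq_mul, mul_one]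
    rw [h]
    exact Submodule.smul_mem _ _ (hEN i l)
end

section
/- Let B₁ be a unital star-subalgebra of A₁ := Matrix (Fin n) (Fin n) ℂ and B₂ a unital star-subalgebra of A₂ := Matrix (Fin m) (Fin m) ℂ, with conditional expectations E₁, E₂ onto B₁, B₂ (linear, range in B_i, fixing B_i, with E_i(b x c) = b E_i(x) c for b, c ∈ B_i). Let W : Fin d₁ → A₁ and V : Fin d₂ → A₂ be unitary orthonormal bases for (B₁ ⊆ A₁, E₁) and (B₂ ⊆ A₂, E₂), each contained in the respective normalizer. Let A := Matrix (Fin n × Fin m) (Fin n × Fin m) ℂ, let B ⊆ A be the ℂ-linear span of the Kronecker products {b₁ ⊗ₖ b₂ : b₁ ∈ B₁, b₂ ∈ B₂} (a unital star-subalgebra realizing B₁ ⊗ B₂ ⊆ A₁ ⊗ A₂), and let E : A →ₗ[ℂ] A be a linear map satisfying E (x ⊗ₖ y) = (E₁ x) ⊗ₖ (E₂ y) for all x ∈ A₁, y ∈ A₂ (which determines E uniquely). Then the d₁·d₂ matrices (W j) ⊗ₖ (V k), for (j,k) : Fin d₁ × Fin d₂, form a unitary orthonormal basis for (B ⊆ A,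 E) contained in the normalizer of B: each (W j) ⊗ₖ (V k) is unitary and normalizes B, E (((W j) ⊗ₖ (V k))ᴴ * ((W j') ⊗ₖ (V k'))) = (if (j,k) = (j',k') then 1 else 0), and Z = Σ_{j,k} ((W j) ⊗ₖ (V k)) * E (((W j) ⊗ₖ (V k))ᴴ * Z) for every Z ∈ A. -/
open Matrix Kronecker

lemma kron_conjT {n m : ℕ} (A : Matrix (Fin n) (Fin n) ℂ) (B : Matrix (Fin m) (Fin m) ℂ) :
    (A ⊗ₖ B)ᴴ = Aᴴ ⊗ₖ Bᴴ := by
  ext ⟨i, i'⟩ ⟨l, l'⟩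
  simp [conjTranspose_apply, kroneckerMap_apply, mul_comm]

lemma kron_sum_sum {n m : ℕ} {d₁ d₂ : ℕ} (f : Fin d₁ → Matrix (Fin n) (Fin n) ℂ)
    (g : Fin d₂ → Matrix (Fin m) (Fin m) ℂ) :
    (∑ j, f j) ⊗ₖ (∑ k, g k) = ∑ j, ∑ k, (f j) ⊗ₖ (g k) := by
  ext ⟨i, i'⟩ ⟨l, l'⟩
  simp [kroneckerMap_apply, Matrix.sum_apply, Finset.sum_mul_sum]

lemma kron_span_top {n m : ℕ} :
    Submodule.span ℂ {z : Matrix (Fin n × Fin m) (Fin n × Fin m) ℂ |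
      ∃ x y, z = x ⊗ₖ y} = ⊤ := by
  rw [eq_top_iff]
  intro Z _
  rw [matrix_eq_sum_single Z]
  apply Submodule.sum_mem; intro p _
  apply Submodule.sum_mem; intro q _
  have h : Matrix.single p q (Z p q) =
      (Z p q) • ((Matrix.single p.1 q.1 (1 : ℂ)) ⊗ₖ (Matrix.single p.2 q.2 (1 : ℂ))) := by
    obtain ⟨p1, p2⟩ := p; obtain ⟨q1, q2⟩ := q
    ext ⟨i, i'⟩ ⟨l, l'⟩
    simp only [Matrix.single, of_apply, kroneckerMap_apply, Matrix.smul_apply,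
      smul_eq_mul, Prod.mk.injEq]
    split_ifs with h1 h2 h3 h2 h3 h3 <;> simp_all
  rw [h]
  exact Submodule.smul_mem _ _ (Submodule.subset_span ⟨_, _, rfl⟩)

/-- the Kronecker products of two unitary orthonormal bases,
each contained in the respective normalizer, form a unitary orthonormal basis
for the tensor-product inclusion, contained in the normalizer of
`B = span {b₁ ⊗ₖ b₂}`. -/
theorem tensor_uonb (n m : ℕ)
    (B₁ : StarSubalgebra ℂ (Matrix (Fin n) (Fin n) ℂ))
    (B₂ : StarSubalgebra ℂ (Matrix (Fin m) (Fin m) ℂ))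
    (E₁ : Matrix (Fin n) (Fin n) ℂ →ₗ[ℂ] Matrix (Fin n) (Fin n) ℂ)
    (E₂ : Matrix (Fin m) (Fin m) ℂ →ₗ[ℂ] Matrix (Fin m) (Fin m) ℂ)
    (hrange₁ : ∀ x, E₁ x ∈ B₁) (hfix₁ : ∀ b ∈ B₁, E₁ b = b)
    (hbimod₁ : ∀ b ∈ B₁, ∀ c ∈ B₁, ∀ x, E₁ (b * x * c) = b * E₁ x * c)
    (hrange₂ : ∀ x, E₂ x ∈ B₂) (hfix₂ : ∀ b ∈ B₂, E₂ b = b)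
    (hbimod₂ : ∀ b ∈ B₂, ∀ c ∈ B₂, ∀ x, E₂ (b * x * c) = b * E₂ x * c)
    (d₁ d₂ : ℕ)
    (W : Fin d₁ → Matrix (Fin n) (Fin n) ℂ)
    (V : Fin d₂ → Matrix (Fin m) (Fin m) ℂ)
    (hWu : ∀ j, W j ∈ unitary (Matrix (Fin n) (Fin n) ℂ))
    (hWnorm : ∀ j, (fun x => W j * x * (W j)ᴴ) ''
        (B₁ : Set (Matrix (Fin n) (Fin n) ℂ)) = B₁)
    (hWortho : ∀ j k, E₁ ((W j)ᴴ * W k) = if j = k then 1 else 0)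
    (hWbasis : ∀ X : Matrix (Fin n) (Fin n) ℂ,
        X = ∑ j, W j * E₁ ((W j)ᴴ * X))
    (hVu : ∀ j, V j ∈ unitary (Matrix (Fin m) (Fin m) ℂ))
    (hVnorm : ∀ j, (fun x => V j * x * (V j)ᴴ) ''
        (B₂ : Set (Matrix (Fin m) (Fin m) ℂ)) = B₂)
    (hVortho : ∀ j k, E₂ ((V j)ᴴ * V k) = if j = k then 1 else 0)
    (hVbasis : ∀ Y : Matrix (Fin m) (Fin m) ℂ,
        Y = ∑ j, V j * E₂ ((V j)ᴴ * Y))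
    (B : Submodule ℂ (Matrix (Fin n × Fin m) (Fin n × Fin m) ℂ))
    (hBdef : B = Submodule.span ℂ
      {z : Matrix (Fin n × Fin m) (Fin n × Fin m) ℂ |
        ∃ b₁ ∈ B₁, ∃ b₂ ∈ B₂, z = b₁ ⊗ₖ b₂})
    (E : Matrix (Fin n × Fin m) (Fin n × Fin m) ℂ →ₗ[ℂ]
        Matrix (Fin n × Fin m) (Fin n × Fin m) ℂ)
    (hE : ∀ (x : Matrix (Fin n) (Fin n) ℂ) (y : Matrix (Fin m) (Fin m) ℂ),
        E (x ⊗ₖ y) = (E₁ x) ⊗ₖ (E₂ y)) :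
    (∀ (j : Fin d₁) (k : Fin d₂),
        (W j) ⊗ₖ (V k) ∈ unitary (Matrix (Fin n × Fin m) (Fin n × Fin m) ℂ)) ∧
    (∀ (j : Fin d₁) (k : Fin d₂),
        (fun z => ((W j) ⊗ₖ (V k)) * z * ((W j) ⊗ₖ (V k))ᴴ) ''
          (B : Set (Matrix (Fin n × Fin m) (Fin n × Fin m) ℂ)) = B) ∧
    (∀ (j j' : Fin d₁) (k k' : Fin d₂),
        E (((W j) ⊗ₖ (V k))ᴴ * ((W j') ⊗ₖ (V k'))) =
          if (j, k) = (j', k') then 1 else 0) ∧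
    (∀ Z : Matrix (Fin n × Fin m) (Fin n × Fin m) ℂ,
        Z = ∑ j, ∑ k,
          ((W j) ⊗ₖ (V k)) * E (((W j) ⊗ₖ (V k))ᴴ * Z)) := by
  have hWs : ∀ j, (W j)ᴴ * W j = 1 := fun j => by
    simpa [Matrix.star_eq_conjTranspose] using (hWu j).1
  have hWs' : ∀ j, W j * (W j)ᴴ = 1 := fun j => by
    simpa [Matrix.star_eq_conjTranspose] using (hWu j).2
  have hVs : ∀ k, (V k)ᴴ * V k = 1 := fun k => by
    simpa [Matrix.star_eq_conjTranspose] using (hVu k).1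
  have hVs' : ∀ k, V k * (V k)ᴴ = 1 := fun k => by
    simpa [Matrix.star_eq_conjTranspose] using (hVu k).2
  -- Part 1 : unitarity
  have part1 : ∀ (j : Fin d₁) (k : Fin d₂),
      (W j) ⊗ₖ (V k) ∈ unitary (Matrix (Fin n × Fin m) (Fin n × Fin m) ℂ) := by
    intro j k
    constructor
    · show star ((W j) ⊗ₖ (V k)) * ((W j) ⊗ₖ (V k)) = 1
      rw [Matrix.star_eq_conjTranspose, kron_conjT, ← Matrix.mul_kronecker_mul,
        hWs, hVs, Matrix.one_kronecker_one]
    · show ((W j) ⊗ₖ (V k)) * star ((W j) ⊗ₖ (V k)) = 1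
      rw [Matrix.star_eq_conjTranspose, kron_conjT, ← Matrix.mul_kronecker_mul,
        hWs', hVs', Matrix.one_kronecker_one]
  -- normalizer helpers
  have hWmem : ∀ j, ∀ b ∈ B₁, W j * b * (W j)ᴴ ∈ B₁ := fun j b hb => by
    have h : W j * b * (W j)ᴴ ∈ (fun x => W j * x * (W j)ᴴ) '' (B₁ : Set _) :=
      ⟨b, hb, rfl⟩
    rw [hWnorm j] at h; exact h
  have hVmem : ∀ k, ∀ b ∈ B₂, V k * b * (V k)ᴴ ∈ B₂ := fun k b hb => by
    have h : V k * b * (V k)ᴴ ∈ (fun x => V k * x * (V k)ᴴ) '' (B₂ : Set _) :=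
      ⟨b, hb, rfl⟩
    rw [hVnorm k] at h; exact h
  have hWmem' : ∀ j, ∀ b ∈ B₁, (W j)ᴴ * b * W j ∈ B₁ := by
    intro j b hb
    have hb' : b ∈ (fun x => W j * x * (W j)ᴴ) '' (B₁ : Set _) := by
      rw [hWnorm j]; exact hb
    obtain ⟨c, hc, hcb⟩ := hb'
    have : (W j)ᴴ * b * W j = c := by
      rw [← hcb]
      calc (W j)ᴴ * (W j * c * (W j)ᴴ) * W j
          = (W j)ᴴ * W j * c * ((W j)ᴴ * W j) := by simp only [mul_assoc]
        _ = c := by rw [hWs j]; simp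
    rw [this]; exact hc
  have hVmem' : ∀ k, ∀ b ∈ B₂, (V k)ᴴ * b * V k ∈ B₂ := by
    intro k b hb
    have hb' : b ∈ (fun x => V k * x * (V k)ᴴ) '' (B₂ : Set _) := by
      rw [hVnorm k]; exact hb
    obtain ⟨c, hc, hcb⟩ := hb'
    have : (V k)ᴴ * b * V k = c := by
      rw [← hcb]
      calc (V k)ᴴ * (V k * c * (V k)ᴴ) * V k
          = (V k)ᴴ * V k * c * ((V k)ᴴ * V k) := by simp only [mul_assoc]
        _ = c := by rw [hVs k]; simp
    rw [this]; exact hc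
  -- conjugation preserves B
  have conj_mem : ∀ (j : Fin d₁) (k : Fin d₂), ∀ z ∈ B,
      ((W j) ⊗ₖ (V k)) * z * ((W j) ⊗ₖ (V k))ᴴ ∈ B := by
    intro j k z hz
    rw [hBdef] at hz ⊢
    induction hz using Submodule.span_induction with
    | mem x hx =>
      obtain ⟨b₁, hb₁, b₂, hb₂, rfl⟩ := hx
      rw [kron_conjT, ← Matrix.mul_kronecker_mul, ← Matrix.mul_kronecker_mul]
      exact Submodule.subset_span ⟨_, hWmem j b₁ hb₁, _, hVmem k b₂ hb₂, rfl⟩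
    | zero => simpa using Submodule.zero_mem _
    | add x y hx hy ihx ihy =>
      have : ((W j) ⊗ₖ (V k)) * (x + y) * ((W j) ⊗ₖ (V k))ᴴ =
          ((W j) ⊗ₖ (V k)) * x * ((W j) ⊗ₖ (V k))ᴴ +
          ((W j) ⊗ₖ (V k)) * y * ((W j) ⊗ₖ (V k))ᴴ := by
        rw [mul_add, add_mul]
      rw [this]; exact Submodule.add_mem _ ihx ihy
    | smul a x hx ih =>
      have : ((W j) ⊗ₖ (V k)) * (a • x) * ((W j) ⊗ₖ (V k))ᴴ =
          a • (((W j) ⊗ₖ (V k)) * x * ((W j) ⊗ₖ (V k))ᴴ) := by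
        rw [mul_smul_comm, smul_mul_assoc]
      rw [this]; exact Submodule.smul_mem _ _ ih
  have conj_mem' : ∀ (j : Fin d₁) (k : Fin d₂), ∀ z ∈ B,
      ((W j) ⊗ₖ (V k))ᴴ * z * ((W j) ⊗ₖ (V k)) ∈ B := by
    intro j k z hz
    rw [hBdef] at hz ⊢
    induction hz using Submodule.span_induction with
    | mem x hx =>
      obtain ⟨b₁, hb₁, b₂, hb₂, rfl⟩ := hx
      rw [kron_conjT, ← Matrix.mul_kronecker_mul, ← Matrix.mul_kronecker_mul]
      exact Submodule.subset_span ⟨_, hWmem' j b₁ hb₁, _, hVmem' k b₂ hb₂, rfl⟩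
    | zero => simpa using Submodule.zero_mem _
    | add x y hx hy ihx ihy =>
      have : ((W j) ⊗ₖ (V k))ᴴ * (x + y) * ((W j) ⊗ₖ (V k)) =
          ((W j) ⊗ₖ (V k))ᴴ * x * ((W j) ⊗ₖ (V k)) +
          ((W j) ⊗ₖ (V k))ᴴ * y * ((W j) ⊗ₖ (V k)) := by
        rw [mul_add, add_mul]
      rw [this]; exact Submodule.add_mem _ ihx ihy
    | smul a x hx ih =>
      have : ((W j) ⊗ₖ (V k))ᴴ * (a • x) * ((W j) ⊗ₖ (V k)) =
          a • (((W j) ⊗ₖ (V k))ᴴ * x * ((W j) ⊗ₖ (V k))) := by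
        rw [mul_smul_comm, smul_mul_assoc]
      rw [this]; exact Submodule.smul_mem _ _ ih
  -- Part 2
  have part2 : ∀ (j : Fin d₁) (k : Fin d₂),
      (fun z => ((W j) ⊗ₖ (V k)) * z * ((W j) ⊗ₖ (V k))ᴴ) ''
        (B : Set (Matrix (Fin n × Fin m) (Fin n × Fin m) ℂ)) = B := by
    intro j k
    have hu : ((W j) ⊗ₖ (V k)) * ((W j) ⊗ₖ (V k))ᴴ = 1 := by
      have := (part1 j k).2
      simpa [Matrix.star_eq_conjTranspose] using this
    ext z
    constructor
    · rintro ⟨w, hw, rfl⟩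
      exact conj_mem j k w hw
    · intro hz
      refine ⟨((W j) ⊗ₖ (V k))ᴴ * z * ((W j) ⊗ₖ (V k)), conj_mem' j k z hz, ?_⟩
      show ((W j) ⊗ₖ (V k)) * (((W j) ⊗ₖ (V k))ᴴ * z * ((W j) ⊗ₖ (V k))) *
          ((W j) ⊗ₖ (V k))ᴴ = z
      calc ((W j) ⊗ₖ (V k)) * (((W j) ⊗ₖ (V k))ᴴ * z * ((W j) ⊗ₖ (V k))) *
            ((W j) ⊗ₖ (V k))ᴴ
          = (((W j) ⊗ₖ (V k)) * ((W j) ⊗ₖ (V k))ᴴ) * z *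
            (((W j) ⊗ₖ (V k)) * ((W j) ⊗ₖ (V k))ᴴ) := by simp only [mul_assoc]
        _ = z := by rw [hu]; simp
  -- Part 3
  have part3 : ∀ (j j' : Fin d₁) (k k' : Fin d₂),
      E (((W j) ⊗ₖ (V k))ᴴ * ((W j') ⊗ₖ (V k'))) =
        if (j, k) = (j', k') then 1 else 0 := by
    intro j j' k k'
    rw [kron_conjT, ← Matrix.mul_kronecker_mul, hE, hWortho, hVortho]
    by_cases h1 : j = j' <;> by_cases h2 : k = k' <;>
      simp [h1, h2, Prod.ext_iff, Matrix.one_kronecker_one, Matrix.kronecker_zero,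
        Matrix.zero_kronecker]
  -- Part 4 : pure tensors
  have pure : ∀ (x : Matrix (Fin n) (Fin n) ℂ) (y : Matrix (Fin m) (Fin m) ℂ),
      x ⊗ₖ y = ∑ j, ∑ k,
        ((W j) ⊗ₖ (V k)) * E (((W j) ⊗ₖ (V k))ᴴ * (x ⊗ₖ y)) := by
    intro x y
    have h : ∀ (j : Fin d₁) (k : Fin d₂),
        ((W j) ⊗ₖ (V k)) * E (((W j) ⊗ₖ (V k))ᴴ * (x ⊗ₖ y)) =
          (W j * E₁ ((W j)ᴴ * x)) ⊗ₖ (V k * E₂ ((V k)ᴴ * y)) := by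
      intro j k
      rw [kron_conjT, ← Matrix.mul_kronecker_mul, hE, ← Matrix.mul_kronecker_mul]
    simp_rw [h]
    rw [← kron_sum_sum, ← hWbasis x, ← hVbasis y]
  have part4 : ∀ Z : Matrix (Fin n × Fin m) (Fin n × Fin m) ℂ,
      Z = ∑ j, ∑ k, ((W j) ⊗ₖ (V k)) * E (((W j) ⊗ₖ (V k))ᴴ * Z) := by
    intro Z
    have hZ : Z ∈ Submodule.span ℂ
        {z : Matrix (Fin n × Fin m) (Fin n × Fin m) ℂ | ∃ x y, z = x ⊗ₖ y} := by
      rw [kron_span_top]; trivial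
    induction hZ using Submodule.span_induction with
    | mem z hz => obtain ⟨x, y, rfl⟩ := hz; exact pure x y
    | zero => simp
    | add x y hx hy ihx ihy =>
      simp_rw [mul_add, map_add, mul_add, Finset.sum_add_distrib]
      rw [← ihx, ← ihy]
    | smul a x hx ih =>
      have h : ∀ (j : Fin d₁) (k : Fin d₂),
          ((W j) ⊗ₖ (V k)) * E (((W j) ⊗ₖ (V k))ᴴ * (a • x)) =
            a • (((W j) ⊗ₖ (V k)) * E (((W j) ⊗ₖ (V k))ᴴ * x)) := by
        intro j k; rw [mul_smul_comm, E.map_smul, mul_smul_comm]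
      simp_rw [h, ← Finset.smul_sum]
      rw [← ih]
  exact ⟨part1, part2, part3, part4⟩
end
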